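/- arXiv:2409.18767 — 5 statements merged into one kernel-verified Lean document; each statement's English description precedes it below -/
import Mathlib

section
/- With the subdivision setup below, the average over all σ ∈ S = (S_n)^{e'} of the squared radius of gyration of the full embedding X^σ (the point cloud of all v = v' + (n−1)e' vertex positions with unit weights) satisfies (1/#S) Σ_{σ∈S} Rg²(X^σ) = Rg²(X', deg + 2/(n−1)) + ((n+1)(2v−n)/(12 v²))·‖W‖² − ((n+1)(2v−1)/(12 v²))·‖W'‖², where Rg²(X', deg + 2/(n−1)) is the weighted squared radius of gyration of X' with the weight of junction vertex k equal to deg(k) + 2/(n−1), ‖W‖² = Σ_{i=1}^{e'} Σ_{j=1}^{n} ‖w(i,j)‖², and ‖W'‖² = Σ_{i=1}^{e'} ‖w'_i‖². -/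
open Finset

/-- Center of mass of a weighted point cloud. -/
noncomputable def com {V : Type*} [Fintype V] {d : ℕ}
    (X : V → EuclideanSpace ℝ (Fin d)) (Ω : V → ℝ) : EuclideanSpace ℝ (Fin d) :=
  (∑ v, Ω v)⁻¹ • ∑ v, Ω v • X v

/-- Weighted squared radius of gyration of a point cloud. -/
noncomputable def rg2 {V : Type*} [Fintype V] {d : ℕ}
    (X : V → EuclideanSpace ℝ (Fin d)) (Ω : V → ℝ) : ℝ :=
  (∑ v, Ω v)⁻¹ * ∑ v, Ω v * ‖X v - com X Ω‖ ^ 2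

/-- Center of mass with unit weights. -/
noncomputable def uMu {V : Type*} [Fintype V] {d : ℕ}
    (X : V → EuclideanSpace ℝ (Fin d)) : EuclideanSpace ℝ (Fin d) :=
  (Fintype.card V : ℝ)⁻¹ • ∑ v, X v

/-- Squared radius of gyration with unit weights. -/
noncomputable def uRg2 {V : Type*} [Fintype V] {d : ℕ}
    (X : V → EuclideanSpace ℝ (Fin d)) : ℝ :=
  (Fintype.card V : ℝ)⁻¹ * ∑ v, ‖X v - uMu X‖ ^ 2

/-- Position of the `j`-th intermediate vertex (1-indexed position `j+1`) on the
subdivided edge `i`, for the permuted displacement vectors: `x^σ_{i,j}` equals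
`X'(tail i)` plus the first `j+1` permuted displacements. -/
noncomputable def xpos {d n v' e' : ℕ}
    (X' : Fin v' → EuclideanSpace ℝ (Fin d)) (tl : Fin e' → Fin v')
    (w : Fin e' → Fin n → EuclideanSpace ℝ (Fin d))
    (σ : Fin e' → Equiv.Perm (Fin n)) (i : Fin e') (j : Fin (n - 1)) :
    EuclideanSpace ℝ (Fin d) :=
  X' (tl i) + ∑ k : Fin n, if (k : ℕ) ≤ (j : ℕ) then w i (σ i k) else 0

-- counting lemmas
lemma nat_count_le (m jv : ℕ) :
    ∑ k ∈ Finset.range m, (if k ≤ jv then 1 else 0) = min (jv+1) m := by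
  induction m with
  | zero => simp
  | succ m ih => rw [Finset.sum_range_succ, ih]; split_ifs <;> omega

lemma nat_count_ge (m k : ℕ) :
    ∑ j ∈ Finset.range m, (if k ≤ j then 1 else 0) = m - k := by
  induction m with
  | zero => simp
  | succ m ih => rw [Finset.sum_range_succ, ih]; split_ifs <;> omega

lemma real_count_le (m jv : ℕ) :
    (∑ k : Fin m, if (k : ℕ) ≤ jv then (1:ℝ) else 0) = (min (jv+1) m : ℕ) := by
  rw [Fin.sum_univ_eq_sum_range (fun k => if k ≤ jv then (1:ℝ) else 0) m, ← nat_count_le m jv]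
  push_cast [apply_ite (fun x : ℕ => (x:ℝ))]
  rfl

lemma real_count_ge (m k : ℕ) :
    (∑ j : Fin m, if k ≤ (j : ℕ) then (1:ℝ) else 0) = (m - k : ℕ) := by
  rw [Fin.sum_univ_eq_sum_range (fun j => if k ≤ j then (1:ℝ) else 0) m, ← nat_count_ge m k]
  push_cast [apply_ite (fun x : ℕ => (x:ℝ))]
  rfl

lemma sum_range_cast (m : ℕ) :
    ∑ j ∈ Finset.range m, (j:ℝ) = m * (m-1) / 2 := by
  induction m with
  | zero => simp
  | succ m ih =>
    rw [Finset.sum_range_succ, ih]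
    rcases m with _ | m
    · simp
    · push_cast; ring

lemma sum_range_sq_cast (m : ℕ) :
    ∑ j ∈ Finset.range m, (j:ℝ)^2 = m * (m-1) * (2*m-1) / 6 := by
  induction m with
  | zero => simp
  | succ m ih =>
    rw [Finset.sum_range_succ, ih]
    rcases m with _ | m
    · simp
    · push_cast; ring

-- L1
lemma sum_fun_apply {ι G : Type*} {M : Type*} [Fintype ι] [DecidableEq ι] [Fintype G]
    [AddCommMonoid M] (a : ι) (F : G → M) :
    ∑ f : ι → G, F (f a) = (Fintype.card G ^ (Fintype.card ι - 1)) • ∑ x, F x := by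
  classical
  rw [← Equiv.sum_comp (Equiv.funSplitAt a G).symm (fun f => F (f a))]
  have h1 : ∀ p : G × ({ j // j ≠ a } → G), ((Equiv.funSplitAt a G).symm p) a = p.1 := by
    intro p
    simp [Equiv.funSplitAt, Equiv.piSplitAt_symm_apply]
  simp only [h1]
  rw [Fintype.sum_prod_type]
  simp only [Finset.sum_const, Finset.card_univ]
  rw [← Finset.smul_sum]
  congr 1
  rw [Fintype.card_fun]
  congr 1
  rw [Fintype.card_subtype_compl, Fintype.card_subtype_eq]

local notation "⟪" x ", " y "⟫" => @inner ℝ _ _ x y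

-- L2
lemma sum_fun_apply_two {ι G : Type*} {F : Type*} [Fintype ι] [DecidableEq ι] [Fintype G]
    [NormedAddCommGroup F] [InnerProductSpace ℝ F]
    {a b : ι} (hab : a ≠ b) (P Q : G → F) :
    ∑ f : ι → G, ⟪P (f a), Q (f b)⟫
      = (Fintype.card G ^ (Fintype.card ι - 2) : ℕ) • ⟪∑ x, P x, ∑ y, Q y⟫ := by
  classical
  rw [← Equiv.sum_comp (Equiv.funSplitAt a G).symm
    (fun f => (⟪P (f a), Q (f b)⟫ : ℝ))]
  have h1 : ∀ p : G × ({ j // j ≠ a } → G), ((Equiv.funSplitAt a G).symm p) a = p.1 := by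
    intro p; simp [Equiv.funSplitAt, Equiv.piSplitAt_symm_apply]
  have h2 : ∀ p : G × ({ j // j ≠ a } → G),
      ((Equiv.funSplitAt a G).symm p) b = p.2 ⟨b, hab.symm⟩ := by
    intro p; simp [Equiv.funSplitAt, Equiv.piSplitAt_symm_apply, hab.symm]
  simp only [h1, h2]
  rw [Fintype.sum_prod_type]
  have hcard : Fintype.card { j // j ≠ a } = Fintype.card ι - 1 := by
    rw [Fintype.card_subtype_compl, Fintype.card_subtype_eq]
  have h3 : ∀ x : G, ∑ r : { j // j ≠ a } → G, (⟪P x, Q (r ⟨b, hab.symm⟩)⟫ : ℝ)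
      = (Fintype.card G ^ (Fintype.card ι - 2) : ℕ) • ⟪P x, ∑ y, Q y⟫ := by
    intro x
    have := sum_fun_apply (⟨b, hab.symm⟩ : { j // j ≠ a })
      (fun y : G => (⟪P x, Q y⟫ : ℝ))
    rw [this, hcard]
    have : ∑ y, (⟪P x, Q y⟫ : ℝ) = ⟪P x, ∑ y, Q y⟫ := (inner_sum _ _ _).symm
    rw [this]
    congr 2
  simp only [h3]
  rw [← Finset.smul_sum, ← sum_inner]

-- L3
lemma perm_sum_apply {n : ℕ} {M : Type*} [AddCommGroup M] [Module ℝ M]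
    [NoZeroSMulDivisors ℝ M] (a : Fin n) (F : Fin n → M) :
    ∑ π : Equiv.Perm (Fin n), F (π a) = ((n-1).factorial : ℝ) • ∑ k, F k := by
  have hn : 0 < n := a.pos
  have hconst : ∀ b : Fin n, ∑ π : Equiv.Perm (Fin n), F (π b)
      = ∑ π : Equiv.Perm (Fin n), F (π a) := by
    intro b
    rw [← Equiv.sum_comp (Equiv.mulRight (Equiv.swap a b)) (fun π => F (π a))]
    apply Finset.sum_congr rfl
    intro π _
    simp [Equiv.Perm.mul_apply]
  have key : (n : ℝ) • ∑ π : Equiv.Perm (Fin n), F (π a)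
      = (n : ℝ) • (((n-1).factorial : ℝ) • ∑ k, F k) := by
    have h1 : ∑ b : Fin n, ∑ π : Equiv.Perm (Fin n), F (π b)
        = (n : ℕ) • ∑ π : Equiv.Perm (Fin n), F (π a) := by
      rw [Finset.sum_congr rfl (fun b _ => hconst b)]
      simp [Finset.sum_const]
    have h2 : ∑ b : Fin n, ∑ π : Equiv.Perm (Fin n), F (π b)
        = (n.factorial : ℕ) • ∑ k, F k := by
      rw [Finset.sum_comm]
      have : ∀ π : Equiv.Perm (Fin n), ∑ b : Fin n, F (π b) = ∑ k, F k := by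
        intro π; exact Equiv.sum_comp π F
      rw [Finset.sum_congr rfl (fun π _ => this π)]
      simp [Finset.sum_const, Fintype.card_perm]
    have h3 : (n : ℝ) • ∑ π : Equiv.Perm (Fin n), F (π a) = (n.factorial : ℕ) • ∑ k, F k := by
      rw [← h2, h1, Nat.cast_smul_eq_nsmul ℝ]
    rw [h3, smul_smul,
      show (n:ℝ) * ((n-1).factorial : ℝ) = ((n.factorial : ℕ) : ℝ) by
        push_cast [← Nat.mul_factorial_pred hn.ne']; ring,
      Nat.cast_smul_eq_nsmul ℝ]
  exact smul_right_injective M (by positivity : (n:ℝ) ≠ 0) key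

-- L4
lemma perm_sum_apply_two {n : ℕ} {a b : Fin n} (hab : a ≠ b) (F : Fin n → Fin n → ℝ) :
    ∑ π : Equiv.Perm (Fin n), F (π a) (π b)
      = ((n-2).factorial : ℝ) * ∑ k, ∑ l ∈ univ \ {k}, F k l := by
  have hn2 : 2 ≤ n := by
    rcases n with _ | _ | n
    · exact a.elim0
    · exact absurd (Fin.ext (by omega : (a:ℕ) = (b:ℕ))) hab
    · omega
  have hpair : ∀ a' b' : Fin n, a' ≠ b' →
      ∑ π : Equiv.Perm (Fin n), F (π a') (π b')
        = ∑ π : Equiv.Perm (Fin n), F (π a) (π b) := by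
    intro a' b' hab'
    set c := Equiv.swap a a' b with hc
    have hca' : a' ≠ c := by
      intro h
      apply hab
      apply Equiv.injective (Equiv.swap a a')
      rw [Equiv.swap_apply_left, ← hc, ← h]
    set τ : Equiv.Perm (Fin n) := (Equiv.swap a a').trans (Equiv.swap c b') with hτ
    have hτa : τ a = a' := by
      rw [hτ]
      simp only [Equiv.trans_apply, Equiv.swap_apply_left]
      exact Equiv.swap_apply_of_ne_of_ne hca' hab'
    have hτb : τ b = b' := by
      rw [hτ]
      simp only [Equiv.trans_apply, ← hc, Equiv.swap_apply_left]
    rw [← Equiv.sum_comp (Equiv.mulRight τ) (fun π => F (π a) (π b))]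
    apply Finset.sum_congr rfl
    intro π _
    simp only [Equiv.coe_mulRight, Equiv.Perm.mul_apply, hτa, hτb]
  have hsum1 : ∑ a' : Fin n, ∑ b' ∈ univ \ {a'},
        (∑ π : Equiv.Perm (Fin n), F (π a') (π b'))
      = (n * (n-1)) • ∑ π : Equiv.Perm (Fin n), F (π a) (π b) := by
    rw [Finset.sum_congr rfl (fun a' _ => Finset.sum_congr rfl
      (fun b' hb' => hpair a' b' (by
        simp only [Finset.mem_sdiff, Finset.mem_singleton] at hb'
        exact fun h => hb'.2 h.symm)))]
    have hcard : ∀ x : Fin n, #(univ \ {x}) = n - 1 := fun x => by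
      rw [Finset.card_sdiff_of_subset (by simp), Finset.card_univ, Fintype.card_fin,
        Finset.card_singleton]
    simp only [Finset.sum_const, hcard]
    rw [Finset.card_univ, Fintype.card_fin, smul_smul]
  have hsum2 : ∑ a' : Fin n, ∑ b' ∈ univ \ {a'},
        (∑ π : Equiv.Perm (Fin n), F (π a') (π b'))
      = (n.factorial) • ∑ k, ∑ l ∈ univ \ {k}, F k l := by
    have hswap : ∑ a' : Fin n, ∑ b' ∈ univ \ {a'},
          (∑ π : Equiv.Perm (Fin n), F (π a') (π b'))
        = ∑ π : Equiv.Perm (Fin n), ∑ a' : Fin n, ∑ b' ∈ univ \ {a'}, F (π a') (π b') := by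
      rw [Finset.sum_comm]
      apply Finset.sum_congr rfl
      intro π _
      rw [Finset.sum_comm]
    rw [hswap]
    have hπ : ∀ π : Equiv.Perm (Fin n), ∑ a' : Fin n, ∑ b' ∈ univ \ {a'}, F (π a') (π b')
        = ∑ k, ∑ l ∈ univ \ {k}, F k l := by
      intro π
      have hin : ∀ a' : Fin n, ∑ b' ∈ univ \ {a'}, F (π a') (π b')
          = ∑ l ∈ univ \ {π a'}, F (π a') l := by
        intro a'
        have himg : (univ \ {a'}).map π.toEmbedding = univ \ {π a'} := by
          ext l
          simp only [Finset.mem_map, Finset.mem_sdiff, Finset.mem_univ, true_and,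
            Finset.mem_singleton, Equiv.coe_toEmbedding]
          constructor
          · rintro ⟨b', hb', rfl⟩
            exact fun h => hb' (π.injective h)
          · intro h
            exact ⟨π.symm l, fun h2 => h (by rw [← h2]; simp), by simp⟩
        rw [← himg, Finset.sum_map]
        simp only [Equiv.coe_toEmbedding]
      rw [Finset.sum_congr rfl (fun a' _ => hin a')]
      exact Equiv.sum_comp π (fun k => ∑ l ∈ univ \ {k}, F k l)
    rw [Finset.sum_congr rfl (fun π _ => hπ π)]
    rw [Finset.sum_const, Finset.card_univ, Fintype.card_perm, Fintype.card_fin]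
  have key := hsum1.symm.trans hsum2
  have hfac : (n.factorial : ℝ) = (n * (n-1) : ℕ) * ((n-2).factorial : ℝ) := by
    have h1 : n * (n-1).factorial = n.factorial := Nat.mul_factorial_pred (by omega)
    have h2 : (n-1) * (n-2).factorial = (n-1).factorial := by
      have := Nat.mul_factorial_pred (n := n-1) (by omega)
      simpa [show n - 1 - 1 = n - 2 by omega] using this
    push_cast [← h1, ← h2]
    ring
  have hne : ((n * (n-1) : ℕ) : ℝ) ≠ 0 := by
    have : 0 < n * (n-1) := by
      have : 1 ≤ n - 1 := by omega
      calc 0 < 2 * 1 := by norm_num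
        _ ≤ n * (n-1) := Nat.mul_le_mul hn2 this
    positivity
  have keyR : ((n * (n-1) : ℕ) : ℝ) * ∑ π : Equiv.Perm (Fin n), F (π a) (π b)
      = ((n * (n-1) : ℕ) : ℝ) * (((n-2).factorial : ℝ) * ∑ k, ∑ l ∈ univ \ {k}, F k l) := by
    rw [← nsmul_eq_mul, key, nsmul_eq_mul, hfac]
    ring
  exact mul_left_cancel₀ hne keyR

lemma sumJ1 {n : ℕ} (hn : 2 ≤ n) : ∑ j : Fin (n-1), ((j:ℝ)+1) = (n:ℝ)*((n:ℝ)-1)/2 := by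
  rw [Fin.sum_univ_eq_sum_range (fun j => (j:ℝ)+1) (n-1), Finset.sum_add_distrib,
    sum_range_cast, Finset.sum_const, Finset.card_range]
  have h1 : ((n-1 : ℕ):ℝ) = (n:ℝ)-1 := by push_cast [Nat.cast_sub (by omega : 1 ≤ n)]; ring
  rw [h1]
  simp only [nsmul_eq_mul, h1]
  ring

lemma sumJ2 {n : ℕ} (hn : 2 ≤ n) :
    ∑ j : Fin (n-1), ((j:ℝ)+1)^2 = (n:ℝ)*((n:ℝ)-1)*(2*(n:ℝ)-1)/6 := by
  rw [Fin.sum_univ_eq_sum_range (fun j => ((j:ℝ)+1)^2) (n-1)]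
  have hexp : ∀ j : ℕ, ((j:ℝ)+1)^2 = (j:ℝ)^2 + 2*(j:ℝ) + 1 := fun j => by ring
  simp only [hexp]
  rw [Finset.sum_add_distrib, Finset.sum_add_distrib, sum_range_sq_cast, ← Finset.mul_sum,
    sum_range_cast, Finset.sum_const, Finset.card_range]
  have h1 : ((n-1 : ℕ):ℝ) = (n:ℝ)-1 := by push_cast [Nat.cast_sub (by omega : 1 ≤ n)]; ring
  rw [h1]
  simp only [nsmul_eq_mul, h1]
  ring

lemma sumC1 {n : ℕ} (hn : 2 ≤ n) :
    ∑ k : Fin n, ((n:ℝ)-1-(k:ℝ)) = (n:ℝ)*((n:ℝ)-1)/2 := by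
  rw [Fin.sum_univ_eq_sum_range (fun k => (n:ℝ)-1-(k:ℝ)) n, Finset.sum_sub_distrib,
    sum_range_cast, Finset.sum_const, Finset.card_range]
  simp only [nsmul_eq_mul]
  ring

lemma sumC2 {n : ℕ} (hn : 2 ≤ n) :
    ∑ k : Fin n, ((n:ℝ)-1-(k:ℝ))^2 = (n:ℝ)*((n:ℝ)-1)*(2*(n:ℝ)-1)/6 := by
  rw [Fin.sum_univ_eq_sum_range (fun k => ((n:ℝ)-1-(k:ℝ))^2) n]
  have hexp : ∀ j : ℕ, ((n:ℝ)-1-(j:ℝ))^2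
      = (j:ℝ)^2 - 2*((n:ℝ)-1)*(j:ℝ) + ((n:ℝ)-1)^2 := fun j => by ring
  simp only [hexp]
  rw [Finset.sum_add_distrib, Finset.sum_sub_distrib, sum_range_sq_cast, ← Finset.mul_sum,
    sum_range_cast, Finset.sum_const, Finset.card_range]
  simp only [nsmul_eq_mul]
  ring

lemma perm_sum_inner {n d : ℕ} (w : Fin n → EuclideanSpace ℝ (Fin d)) (k l : Fin n) :
    ∑ π : Equiv.Perm (Fin n), (⟪w (π k), w (π l)⟫ : ℝ)
      = if k = l then ((n-1).factorial : ℝ) * ∑ m, ‖w m‖^2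
        else ((n-2).factorial : ℝ) * (‖∑ m, w m‖^2 - ∑ m, ‖w m‖^2) := by
  split_ifs with h
  · subst h
    rw [perm_sum_apply k (fun m => (⟪w m, w m⟫ : ℝ))]
    simp only [real_inner_self_eq_norm_sq, smul_eq_mul]
  · rw [perm_sum_apply_two h (fun m p => (⟪w m, w p⟫ : ℝ))]
    congr 1
    have hfull : ‖∑ m, w m‖^2 = ∑ m, ∑ p, (⟪w m, w p⟫ : ℝ) := by
      rw [← real_inner_self_eq_norm_sq, sum_inner]
      exact Finset.sum_congr rfl fun m _ => inner_sum _ _ _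
    have hsplit : ∀ m : Fin n, ∑ p, (⟪w m, w p⟫ : ℝ)
        = ∑ p ∈ univ \ {m}, (⟪w m, w p⟫ : ℝ) + ‖w m‖^2 := by
      intro m
      rw [← real_inner_self_eq_norm_sq (w m)]
      exact Finset.sum_eq_sum_sdiff_singleton_add (Finset.mem_univ m) _
    rw [hfull, Finset.sum_congr rfl fun m _ => hsplit m, Finset.sum_add_distrib]
    ring

noncomputable def Spart {n d : ℕ} (w : Fin n → EuclideanSpace ℝ (Fin d))
    (π : Equiv.Perm (Fin n)) (j : Fin (n-1)) : EuclideanSpace ℝ (Fin d) :=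
  ∑ k : Fin n, if (k:ℕ) ≤ (j:ℕ) then w (π k) else 0

lemma fact1 {n : ℕ} (hn : 1 ≤ n) : ((n-1).factorial : ℝ) * (n:ℝ) = (n.factorial : ℝ) := by
  rw [← Nat.mul_factorial_pred (by omega : n ≠ 0)]; push_cast; ring

lemma fact2 {n : ℕ} (hn : 2 ≤ n) :
    ((n-2).factorial : ℝ) * (((n:ℝ)-1) * (n:ℝ)) = (n.factorial : ℝ) := by
  have h2 : (n-1) * (n-2).factorial = (n-1).factorial := by
    have := Nat.mul_factorial_pred (n := n-1) (by omega : n-1 ≠ 0)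
    rw [show n-1-1 = n-2 by omega] at this
    exact this
  rw [← fact1 (by omega : 1 ≤ n), ← h2]
  push_cast [Nat.cast_sub (by omega : 1 ≤ n)]
  ring

lemma fact1' {n : ℕ} (hn : 1 ≤ n) : ((n-1).factorial : ℝ) = (n.factorial : ℝ) / (n:ℝ) := by
  rw [eq_div_iff (by positivity : (n:ℝ) ≠ 0)]; exact fact1 hn

lemma fact2' {n : ℕ} (hn : 2 ≤ n) :
    ((n-2).factorial : ℝ) = (n.factorial : ℝ) / (((n:ℝ)-1) * (n:ℝ)) := by
  have hne : (((n:ℝ)-1) * (n:ℝ)) ≠ 0 := by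
    have h1 : (1:ℝ) ≤ (n:ℝ)-1 := by
      have : (2:ℝ) ≤ (n:ℝ) := by exact_mod_cast hn
      linarith
    positivity
  rw [eq_div_iff hne]; exact fact2 hn

lemma edge_smul_form {n d : ℕ} (w : Fin n → EuclideanSpace ℝ (Fin d))
    (π : Equiv.Perm (Fin n)) (j : Fin (n-1)) :
    Spart w π j = ∑ k : Fin n, (if (k:ℕ) ≤ (j:ℕ) then (1:ℝ) else 0) • w (π k) := by
  unfold Spart
  apply Finset.sum_congr rfl
  intro k _
  split_ifs <;> simp

lemma countk {n : ℕ} (j : Fin (n-1)) :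
    (∑ k : Fin n, if (k:ℕ) ≤ (j:ℕ) then (1:ℝ) else 0) = ((j:ℝ)+1) := by
  rw [real_count_le n (j:ℕ)]
  have hj1 : min ((j:ℕ)+1) n = (j:ℕ)+1 := by have := j.isLt; omega
  rw [hj1]; push_cast; ring

lemma edgeB {n d : ℕ} (hn : 2 ≤ n) (w : Fin n → EuclideanSpace ℝ (Fin d)) :
    ∑ π : Equiv.Perm (Fin n), ∑ j : Fin (n-1), Spart w π j
      = ((n.factorial : ℝ) * (((n:ℝ)-1)/2)) • ∑ m, w m := by
  rw [Finset.sum_comm]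
  have hj : ∀ j : Fin (n-1),
      ∑ π : Equiv.Perm (Fin n), Spart w π j
        = (((j:ℝ)+1) * ((n-1).factorial : ℝ)) • ∑ m, w m := by
    intro j
    simp only [edge_smul_form]
    rw [Finset.sum_comm]
    have hk : ∀ k : Fin n,
        ∑ π : Equiv.Perm (Fin n), (if (k:ℕ) ≤ (j:ℕ) then (1:ℝ) else 0) • w (π k)
          = (if (k:ℕ) ≤ (j:ℕ) then (1:ℝ) else 0) • (((n-1).factorial : ℝ) • ∑ m, w m) := by
      intro k
      rw [← Finset.smul_sum, perm_sum_apply k w]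
    rw [Finset.sum_congr rfl fun k _ => hk k, ← Finset.sum_smul, countk j, smul_smul]
  rw [Finset.sum_congr rfl fun j _ => hj j, ← Finset.sum_smul]
  congr 1
  rw [← Finset.sum_mul, sumJ1 hn, ← fact1 (by omega : 1 ≤ n)]
  ring

lemma double_sum_eval {n : ℕ} (c : Fin n → ℝ) (d1 d2 : ℝ) :
    ∑ k, ∑ l, (c k * c l) * (if k = l then d1 else d2)
      = d2 * (∑ k, c k)^2 + (d1 - d2) * (∑ k, (c k)^2) := by
  have hl : ∀ k, ∑ l, (c k * c l) * (if k = l then d1 else d2)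
      = (∑ l, (c k * c l) * d2) + (c k * c k * d1 - c k * c k * d2) := by
    intro k
    have hterm : ∀ l, (c k * c l) * (if k = l then d1 else d2)
        = (c k * c l) * d2 + (if k = l then c k * c l * d1 - c k * c l * d2 else 0) := by
      intro l; split_ifs <;> ring
    rw [Finset.sum_congr rfl fun l _ => hterm l, Finset.sum_add_distrib, Finset.sum_ite_eq]
    simp
  rw [Finset.sum_congr rfl fun k _ => hl k, Finset.sum_add_distrib]
  have h1 : ∑ k, ∑ l, (c k * c l) * d2 = ((∑ k, c k) * (∑ k, c k)) * d2 := by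
    rw [Finset.sum_congr rfl fun k _ => by rw [← Finset.sum_mul, ← Finset.mul_sum],
      ← Finset.sum_mul, ← Finset.sum_mul]
  have h2 : ∑ k, (c k * c k * d1 - c k * c k * d2) = (∑ k, (c k)^2) * (d1 - d2) := by
    rw [Finset.sum_congr rfl fun k _ => show c k * c k * d1 - c k * c k * d2
      = (c k)^2 * (d1 - d2) by ring, ← Finset.sum_mul]
  rw [h1, h2]
  ring

lemma edgeC {n d : ℕ} (hn : 2 ≤ n) (w : Fin n → EuclideanSpace ℝ (Fin d)) :
    ∑ π : Equiv.Perm (Fin n), ‖∑ j : Fin (n-1), Spart w π j‖^2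
      = (n.factorial : ℝ) *
          ((((n:ℝ)-1)*(2*(n:ℝ)-1)/6) * (∑ m, ‖w m‖^2)
            + ((n:ℝ)*((n:ℝ)-1)/4 - (2*(n:ℝ)-1)/6) * (‖∑ m, w m‖^2 - ∑ m, ‖w m‖^2)) := by
  have hU : ∀ π : Equiv.Perm (Fin n),
      ∑ j : Fin (n-1), Spart w π j = ∑ k : Fin n, ((n:ℝ)-1-(k:ℝ)) • w (π k) := by
    intro π
    simp only [edge_smul_form]
    rw [Finset.sum_comm]
    apply Finset.sum_congr rfl
    intro k _
    rw [← Finset.sum_smul]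
    congr 1
    rw [real_count_ge (n-1) (k:ℕ)]
    push_cast [Nat.cast_sub (show (k:ℕ) ≤ n-1 by have := k.isLt; omega),
      Nat.cast_sub (show 1 ≤ n by omega)]
    ring
  have hnorm : ∀ π : Equiv.Perm (Fin n),
      ‖∑ k : Fin n, ((n:ℝ)-1-(k:ℝ)) • w (π k)‖^2
        = ∑ k : Fin n, ∑ l : Fin n,
            (((n:ℝ)-1-(k:ℝ)) * ((n:ℝ)-1-(l:ℝ))) * (⟪w (π k), w (π l)⟫ : ℝ) := by
    intro π
    rw [← real_inner_self_eq_norm_sq, sum_inner]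
    apply Finset.sum_congr rfl
    intro k _
    rw [inner_sum]
    apply Finset.sum_congr rfl
    intro l _
    rw [real_inner_smul_left, real_inner_smul_right]
    ring
  rw [Finset.sum_congr rfl fun π _ => by rw [hU π, hnorm π]]
  rw [Finset.sum_comm]
  rw [Finset.sum_congr rfl fun k (_ : k ∈ univ) => Finset.sum_comm]
  have hkl : ∀ k l : Fin n,
      ∑ π : Equiv.Perm (Fin n),
          (((n:ℝ)-1-(k:ℝ)) * ((n:ℝ)-1-(l:ℝ))) * (⟪w (π k), w (π l)⟫ : ℝ)
        = (((n:ℝ)-1-(k:ℝ)) * ((n:ℝ)-1-(l:ℝ))) *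
            (if k = l then ((n-1).factorial : ℝ) * ∑ m, ‖w m‖^2
              else ((n-2).factorial : ℝ) * (‖∑ m, w m‖^2 - ∑ m, ‖w m‖^2)) := by
    intro k l
    rw [← Finset.mul_sum, perm_sum_inner]
  rw [Finset.sum_congr rfl fun k _ => Finset.sum_congr rfl fun l _ => hkl k l]
  rw [double_sum_eval (fun k : Fin n => (n:ℝ)-1-(k:ℝ))]
  rw [sumC1 hn, sumC2 hn, fact1' (by omega : 1 ≤ n), fact2' hn]
  have hne1 : ((n:ℝ)-1) ≠ 0 := by
    have : (2:ℝ) ≤ (n:ℝ) := by exact_mod_cast hn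
    intro h; linarith [h]
  have hne2 : (n:ℝ) ≠ 0 := by positivity
  field_simp
  ring

lemma edgeA {n d : ℕ} (hn : 2 ≤ n) (t h : EuclideanSpace ℝ (Fin d))
    (w : Fin n → EuclideanSpace ℝ (Fin d)) (hW : ∑ m, w m = h - t) :
    ∑ π : Equiv.Perm (Fin n), ∑ j : Fin (n-1), ‖t + Spart w π j‖^2
      = (n.factorial : ℝ) *
          ((((n:ℝ)-1)/2)*(‖h‖^2+‖t‖^2) - (((n:ℝ)-1)/2)*‖h-t‖^2
            + (((n:ℝ)-1)/2)*(∑ m, ‖w m‖^2)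
            + (((n:ℝ)-2)/3)*(‖h-t‖^2 - ∑ m, ‖w m‖^2)) := by
  have hexp : ∀ (π : Equiv.Perm (Fin n)) (j : Fin (n-1)),
      ‖t + Spart w π j‖^2 = ‖t‖^2 + 2*(⟪t, Spart w π j⟫:ℝ) + ‖Spart w π j‖^2 :=
    fun π j => norm_add_sq_real t (Spart w π j)
  rw [Finset.sum_congr rfl fun π _ => Finset.sum_congr rfl fun j _ => hexp π j]
  simp only [Finset.sum_add_distrib]
  -- term 1
  have hT1 : ∑ _π : Equiv.Perm (Fin n), ∑ _j : Fin (n-1), ‖t‖^2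
      = (n.factorial : ℝ) * ((n:ℝ)-1) * ‖t‖^2 := by
    simp only [Finset.sum_const, Finset.card_univ, Fintype.card_perm, Fintype.card_fin,
      nsmul_eq_mul, smul_eq_mul]
    push_cast [Nat.cast_sub (show 1 ≤ n by omega)]
    ring
  -- term 2
  have hT2 : ∑ π : Equiv.Perm (Fin n), ∑ j : Fin (n-1), 2*(⟪t, Spart w π j⟫:ℝ)
      = 2 * ((n.factorial : ℝ) * (((n:ℝ)-1)/2)) * (⟪t, h - t⟫:ℝ) := by
    have : ∑ π : Equiv.Perm (Fin n), ∑ j : Fin (n-1), 2*(⟪t, Spart w π j⟫:ℝ)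
        = 2 * (⟪t, ∑ π : Equiv.Perm (Fin n), ∑ j : Fin (n-1), Spart w π j⟫:ℝ) := by
      rw [inner_sum, Finset.mul_sum]
      apply Finset.sum_congr rfl
      intro π _
      rw [inner_sum, Finset.mul_sum]
    rw [this, edgeB hn w, hW, real_inner_smul_right]
    ring
  -- term 3
  have hnorm : ∀ (π : Equiv.Perm (Fin n)) (j : Fin (n-1)),
      ‖Spart w π j‖^2
        = ∑ k : Fin n, ∑ l : Fin n,
            ((if (k:ℕ) ≤ (j:ℕ) then (1:ℝ) else 0) * (if (l:ℕ) ≤ (j:ℕ) then (1:ℝ) else 0))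
              * (⟪w (π k), w (π l)⟫ : ℝ) := by
    intro π j
    rw [edge_smul_form, ← real_inner_self_eq_norm_sq, sum_inner]
    apply Finset.sum_congr rfl
    intro k _
    rw [inner_sum]
    apply Finset.sum_congr rfl
    intro l _
    rw [real_inner_smul_left, real_inner_smul_right]
    ring
  have hT3 : ∑ π : Equiv.Perm (Fin n), ∑ j : Fin (n-1), ‖Spart w π j‖^2
      = (((n-2).factorial : ℝ) * (‖h-t‖^2 - ∑ m, ‖w m‖^2)) * ((n:ℝ)*((n:ℝ)-1)*(2*(n:ℝ)-1)/6)
        + (((n-1).factorial : ℝ) * (∑ m, ‖w m‖^2)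
            - ((n-2).factorial : ℝ) * (‖h-t‖^2 - ∑ m, ‖w m‖^2)) * ((n:ℝ)*((n:ℝ)-1)/2) := by
    rw [Finset.sum_comm]
    have hj : ∀ j : Fin (n-1),
        ∑ π : Equiv.Perm (Fin n), ‖Spart w π j‖^2
          = (((n-2).factorial : ℝ) * (‖h-t‖^2 - ∑ m, ‖w m‖^2)) * ((j:ℝ)+1)^2
            + (((n-1).factorial : ℝ) * (∑ m, ‖w m‖^2)
                - ((n-2).factorial : ℝ) * (‖h-t‖^2 - ∑ m, ‖w m‖^2)) * ((j:ℝ)+1) := by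
      intro j
      rw [Finset.sum_congr rfl fun π _ => hnorm π j]
      rw [Finset.sum_comm]
      rw [Finset.sum_congr rfl fun k (_ : k ∈ univ) => Finset.sum_comm]
      have hkl : ∀ k l : Fin n,
          ∑ π : Equiv.Perm (Fin n),
              ((if (k:ℕ) ≤ (j:ℕ) then (1:ℝ) else 0) * (if (l:ℕ) ≤ (j:ℕ) then (1:ℝ) else 0))
                * (⟪w (π k), w (π l)⟫ : ℝ)
            = ((if (k:ℕ) ≤ (j:ℕ) then (1:ℝ) else 0) * (if (l:ℕ) ≤ (j:ℕ) then (1:ℝ) else 0)) *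
                (if k = l then ((n-1).factorial : ℝ) * ∑ m, ‖w m‖^2
                  else ((n-2).factorial : ℝ) * (‖∑ m, w m‖^2 - ∑ m, ‖w m‖^2)) := by
        intro k l
        rw [← Finset.mul_sum, perm_sum_inner]
      rw [Finset.sum_congr rfl fun k _ => Finset.sum_congr rfl fun l _ => hkl k l]
      rw [double_sum_eval (fun k : Fin n => if (k:ℕ) ≤ (j:ℕ) then (1:ℝ) else 0)]
      have hsq : ∑ k : Fin n, (if (k:ℕ) ≤ (j:ℕ) then (1:ℝ) else 0)^2
          = ∑ k : Fin n, (if (k:ℕ) ≤ (j:ℕ) then (1:ℝ) else 0) := by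
        apply Finset.sum_congr rfl
        intro k _
        split_ifs <;> norm_num
      rw [hsq, countk j, hW]
    rw [Finset.sum_congr rfl fun j _ => hj j, Finset.sum_add_distrib,
      ← Finset.mul_sum, ← Finset.mul_sum, sumJ1 hn, sumJ2 hn]
  rw [hT1, hT2, hT3]
  have hip : (⟪t, h - t⟫:ℝ) = (‖h‖^2 + ‖t‖^2 - ‖h-t‖^2)/2 - ‖t‖^2 := by
    have h1 := norm_sub_sq_real h t
    have h2 : (⟪t, h - t⟫:ℝ) = (⟪h, t⟫:ℝ) - ‖t‖^2 := by
      rw [inner_sub_right, real_inner_self_eq_norm_sq, real_inner_comm]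
    linarith
  rw [hip, fact1' (by omega : 1 ≤ n), fact2' hn]
  have hne1 : ((n:ℝ)-1) ≠ 0 := by
    have : (2:ℝ) ≤ (n:ℝ) := by exact_mod_cast hn
    intro h'; linarith [h']
  have hne2 : (n:ℝ) ≠ 0 := by positivity
  field_simp
  ring

lemma uRg2_eq {V : Type*} [Fintype V] {d : ℕ} (X : V → EuclideanSpace ℝ (Fin d))
    (h : (Fintype.card V : ℝ) ≠ 0) :
    uRg2 X = (Fintype.card V : ℝ)⁻¹ * (∑ v, ‖X v‖^2) - ‖uMu X‖^2 := by
  unfold uRg2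
  rw [Finset.sum_congr rfl fun v _ => norm_sub_sq_real (X v) (uMu X)]
  rw [Finset.sum_add_distrib, Finset.sum_sub_distrib, Finset.sum_const, Finset.card_univ]
  have hμ : (∑ v, X v) = (Fintype.card V : ℝ) • uMu X := by
    unfold uMu; rw [smul_smul, mul_inv_cancel₀ h, one_smul]
  have h2 : ∑ v, 2*(⟪X v, uMu X⟫:ℝ) = 2 * ((Fintype.card V:ℝ) * ‖uMu X‖^2) := by
    rw [← Finset.mul_sum]
    congr 1
    rw [← sum_inner, hμ, real_inner_smul_left, real_inner_self_eq_norm_sq]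
  rw [h2, nsmul_eq_mul]
  field_simp
  ring

lemma rg2_eq {V : Type*} [Fintype V] {d : ℕ} (X : V → EuclideanSpace ℝ (Fin d))
    (Ω : V → ℝ) (h : (∑ v, Ω v) ≠ 0) :
    rg2 X Ω = (∑ v, Ω v)⁻¹ * (∑ v, Ω v * ‖X v‖^2) - ‖com X Ω‖^2 := by
  unfold rg2
  have hexp : ∀ v, Ω v * ‖X v - com X Ω‖^2
      = Ω v * ‖X v‖^2 - 2 * (⟪Ω v • X v, com X Ω⟫:ℝ) + Ω v * ‖com X Ω‖^2 := by
    intro v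
    rw [norm_sub_sq_real, real_inner_smul_left]
    ring
  rw [Finset.sum_congr rfl fun v _ => hexp v]
  rw [Finset.sum_add_distrib, Finset.sum_sub_distrib]
  have hμ : (∑ v, Ω v • X v) = (∑ v, Ω v) • com X Ω := by
    unfold com; rw [smul_smul, mul_inv_cancel₀ h, one_smul]
  have h2 : ∑ v, 2 * (⟪Ω v • X v, com X Ω⟫:ℝ) = 2 * ((∑ v, Ω v) * ‖com X Ω‖^2) := by
    rw [← Finset.mul_sum, ← sum_inner, hμ, real_inner_smul_left, real_inner_self_eq_norm_sq]
  rw [h2, ← Finset.sum_mul]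
  field_simp
  ring

set_option maxHeartbeats 2000000 in
/-- Main symmetrization formula: the average over `σ ∈ S = (S_n)^{e'}` of the squared
radius of gyration of the full embedding `X^σ` of the subdivided graph `G` (junctions
indexed by `Fin v'`, intermediate vertices by `Fin e' × Fin (n−1)`, unit weights,
`v = v' + (n−1)e'` vertices in total) equals
`Rg²(X', deg + 2/(n−1)) + ((n+1)(2v−n)/(12v²))·‖W‖² − ((n+1)(2v−1)/(12v²))·‖W'‖²`,
where the junction vertex `k` carries weight `deg(k) + 2/(n−1)` with
`deg(k) = #{i : head i = k} + #{i : tail i = k}`, `‖W‖² = Σᵢ Σⱼ ‖w(i,j)‖²` and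
`‖W'‖² = Σᵢ ‖w'ᵢ‖²`. -/
theorem average_rg2_subdivided_graph {d n v' e' : ℕ}
    (hd : 1 ≤ d) (hn : 2 ≤ n) (hv' : 1 ≤ v') (he' : 1 ≤ e')
    (head tl : Fin e' → Fin v')
    (X' : Fin v' → EuclideanSpace ℝ (Fin d))
    (w : Fin e' → Fin n → EuclideanSpace ℝ (Fin d))
    (hw : ∀ i, ∑ j, w i j = X' (head i) - X' (tl i)) :
    (Fintype.card (Fin e' → Equiv.Perm (Fin n)) : ℝ)⁻¹ *
        ∑ σ : Fin e' → Equiv.Perm (Fin n),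
          uRg2 (Sum.elim X'
            (fun p : Fin e' × Fin (n - 1) => xpos X' tl w σ p.1 p.2))
      = rg2 X' (fun k =>
            (((univ.filter fun i => head i = k).card : ℝ)
              + ((univ.filter fun i => tl i = k).card : ℝ))
            + 2 / ((n : ℝ) - 1))
        + (((n : ℝ) + 1) * (2 * ((v' : ℝ) + ((n : ℝ) - 1) * (e' : ℝ)) - (n : ℝ))
              / (12 * ((v' : ℝ) + ((n : ℝ) - 1) * (e' : ℝ)) ^ 2)) *
            (∑ i : Fin e', ∑ j : Fin n, ‖w i j‖ ^ 2)
        - (((n : ℝ) + 1) * (2 * ((v' : ℝ) + ((n : ℝ) - 1) * (e' : ℝ)) - 1)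
              / (12 * ((v' : ℝ) + ((n : ℝ) - 1) * (e' : ℝ)) ^ 2)) *
            (∑ i : Fin e', ‖X' (head i) - X' (tl i)‖ ^ 2) := by
  classical
  have hn1 : 1 ≤ n := by omega
  have h2R : (2:ℝ) ≤ (n:ℝ) := by exact_mod_cast hn
  have hne_n : (n:ℝ) ≠ 0 := by positivity
  have hne_n1 : ((n:ℝ)-1) ≠ 0 := by intro h'; linarith
  have hcast : ((n-1 : ℕ):ℝ) = (n:ℝ)-1 := by push_cast [Nat.cast_sub hn1]; ring
  set F : ℝ := (n.factorial : ℝ) with hF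
  have hFpos : (0:ℝ) < F := by rw [hF]; exact_mod_cast Nat.factorial_pos n
  have hFne : F ≠ 0 := ne_of_gt hFpos
  set N : ℝ := (v' : ℝ) + ((n : ℝ) - 1) * (e' : ℝ) with hNdef
  have hNpos : 0 < N := by
    have h1 : (1:ℝ) ≤ (v':ℝ) := by exact_mod_cast hv'
    have h2 : (1:ℝ) ≤ (e':ℝ) := by exact_mod_cast he'
    rw [hNdef]; nlinarith
  have hNne : N ≠ 0 := ne_of_gt hNpos
  have hcardV : ((Fintype.card (Fin v' ⊕ Fin e' × Fin (n-1))) : ℝ) = N := by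
    rw [Fintype.card_sum, Fintype.card_prod, Fintype.card_fin, Fintype.card_fin,
      Fintype.card_fin]
    push_cast [Nat.cast_sub hn1]
    rw [hNdef]; ring
  have hCard : ((Fintype.card (Fin e' → Equiv.Perm (Fin n))) : ℝ) = F ^ e' := by
    rw [Fintype.card_fun, Fintype.card_perm, Fintype.card_fin, Fintype.card_fin]
    push_cast; rfl
  have hpow1 : ((Fintype.card (Equiv.Perm (Fin n)) ^ (Fintype.card (Fin e') - 1) : ℕ) : ℝ)
      = F ^ (e'-1) := by
    rw [Fintype.card_perm, Fintype.card_fin, Fintype.card_fin]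
    push_cast; rfl
  have hFpow : F^(e'-1) * F = F^e' := by
    rw [← pow_succ]; congr 1; omega
  -- abbreviations
  set u : Fin e' → EuclideanSpace ℝ (Fin d) :=
    fun i => (((n:ℝ)-1)/2) • (X' (head i) - X' (tl i)) with hu
  set M : EuclideanSpace ℝ (Fin d) :=
    (∑ k, X' k) + ∑ i, (((n:ℝ)-1) • X' (tl i) + u i) with hM
  set Z : Fin e' → Equiv.Perm (Fin n) → EuclideanSpace ℝ (Fin d) :=
    fun i π => (∑ j : Fin (n-1), Spart (w i) π j) - u i with hZdef
  set Y : (Fin e' → Equiv.Perm (Fin n)) → (Fin v' ⊕ Fin e' × Fin (n-1)) →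
      EuclideanSpace ℝ (Fin d) :=
    fun σ => Sum.elim X' (fun p : Fin e' × Fin (n-1) => xpos X' tl w σ p.1 p.2) with hY
  -- total position sum
  have hnm1smul : ∀ x : EuclideanSpace ℝ (Fin d), (n-1 : ℕ) • x = ((n:ℝ)-1) • x := by
    intro x; rw [← hcast, Nat.cast_smul_eq_nsmul]
  have hYsum : ∀ σ, ∑ a, Y σ a = M + ∑ i, Z i (σ i) := by
    intro σ
    rw [hY]
    rw [Fintype.sum_sum_type]
    simp only [Sum.elim_inl, Sum.elim_inr]
    rw [Fintype.sum_prod_type]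
    have hi : ∀ i, ∑ j : Fin (n-1), xpos X' tl w σ i j
        = (((n:ℝ)-1) • X' (tl i) + u i) + Z i (σ i) := by
      intro i
      have hx : ∀ j : Fin (n-1), xpos X' tl w σ i j
          = X' (tl i) + Spart (w i) (σ i) j := fun j => rfl
      rw [Finset.sum_congr rfl fun j _ => hx j, Finset.sum_add_distrib,
        Finset.sum_const, Finset.card_univ, Fintype.card_fin, hnm1smul]
      rw [hZdef]
      simp only [add_assoc, add_sub_cancel]
    rw [Finset.sum_congr rfl fun i _ => hi i, Finset.sum_add_distrib, hM]
    abel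
  have hZ0 : ∀ i, ∑ π : Equiv.Perm (Fin n), Z i π = 0 := by
    intro i
    rw [hZdef]
    simp only
    rw [Finset.sum_sub_distrib, edgeB hn (w i), hw i, Finset.sum_const,
      Finset.card_univ, Fintype.card_perm, Fintype.card_fin,
      ← Nat.cast_smul_eq_nsmul ℝ (n.factorial), hu]
    simp only [smul_smul, ← hF]
    rw [show F * (((n:ℝ)-1)/2) = F * (((n:ℝ)-1)/2) * 1 by ring]
    rw [sub_self]
  -- sum of squared norms
  have hPσ : ∀ σ, ∑ a, ‖Y σ a‖^2
      = (∑ k, ‖X' k‖^2) + ∑ i, ∑ j : Fin (n-1), ‖X' (tl i) + Spart (w i) (σ i) j‖^2 := by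
    intro σ
    rw [hY]
    rw [Fintype.sum_sum_type]
    simp only [Sum.elim_inl, Sum.elim_inr]
    rw [Fintype.sum_prod_type]
    rfl
  have hPsum : ∑ σ : Fin e' → Equiv.Perm (Fin n), ∑ a, ‖Y σ a‖^2
      = F^e' * ((∑ k, ‖X' k‖^2)
          + ((((n:ℝ)-1)/2) * (∑ i, ‖X' (head i)‖^2)
            + (((n:ℝ)-1)/2) * (∑ i, ‖X' (tl i)‖^2)
            + ((((n:ℝ)-2)/3) - (((n:ℝ)-1)/2)) * (∑ i, ‖X' (head i) - X' (tl i)‖^2)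
            + ((((n:ℝ)-1)/2) - (((n:ℝ)-2)/3)) * (∑ i, ∑ m : Fin n, ‖w i m‖^2))) := by
    rw [Finset.sum_congr rfl fun σ _ => hPσ σ, Finset.sum_add_distrib]
    rw [Finset.sum_const, Finset.card_univ, Finset.sum_comm]
    have hgi : ∀ i, ∑ σ : Fin e' → Equiv.Perm (Fin n),
        ∑ j : Fin (n-1), ‖X' (tl i) + Spart (w i) (σ i) j‖^2
        = F^e' * ((((n:ℝ)-1)/2)*‖X' (head i)‖^2
            + (((n:ℝ)-1)/2)*‖X' (tl i)‖^2
            + ((((n:ℝ)-2)/3) - (((n:ℝ)-1)/2))*‖X' (head i) - X' (tl i)‖^2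
            + ((((n:ℝ)-1)/2) - (((n:ℝ)-2)/3))*(∑ m : Fin n, ‖w i m‖^2)) := by
      intro i
      have h1 := sum_fun_apply (ι := Fin e') (G := Equiv.Perm (Fin n)) i
        (fun π => ∑ j : Fin (n-1), ‖X' (tl i) + Spart (w i) π j‖^2)
      rw [h1, edgeA hn (X' (tl i)) (X' (head i)) (w i) (hw i)]
      rw [nsmul_eq_mul, hpow1, ← hF, ← mul_assoc, hFpow]
      ring
    rw [Finset.sum_congr rfl fun i _ => hgi i, ← Finset.mul_sum, nsmul_eq_mul, hCard]
    simp only [Finset.sum_add_distrib, ← Finset.mul_sum]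
    ring
  have hZvar : ∀ i, ∑ π : Equiv.Perm (Fin n), ‖Z i π‖^2
      = F * ((((n:ℝ)-1)*(2*(n:ℝ)-1)/6) * (∑ m : Fin n, ‖w i m‖^2)
          + ((n:ℝ)*((n:ℝ)-1)/4 - (2*(n:ℝ)-1)/6) *
              (‖X' (head i) - X' (tl i)‖^2 - ∑ m : Fin n, ‖w i m‖^2)
          - (((n:ℝ)-1)/2)^2 * ‖X' (head i) - X' (tl i)‖^2) := by
    intro i
    have hZn : ∀ π : Equiv.Perm (Fin n), ‖Z i π‖^2
        = ‖∑ j : Fin (n-1), Spart (w i) π j‖^2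
          - 2*(⟪∑ j : Fin (n-1), Spart (w i) π j, u i⟫:ℝ) + ‖u i‖^2 := by
      intro π; rw [hZdef]; exact norm_sub_sq_real _ _
    rw [Finset.sum_congr rfl fun π _ => hZn π, Finset.sum_add_distrib,
      Finset.sum_sub_distrib, Finset.sum_const, Finset.card_univ, Fintype.card_perm,
      Fintype.card_fin]
    have hmid : ∑ π : Equiv.Perm (Fin n),
        2*(⟪∑ j : Fin (n-1), Spart (w i) π j, u i⟫:ℝ)
        = 2 * ((F * (((n:ℝ)-1)/2)) * ((((n:ℝ)-1)/2) * ‖X' (head i) - X' (tl i)‖^2)) := by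
      rw [← Finset.mul_sum, ← sum_inner, edgeB hn (w i), hw i, real_inner_smul_left, hu]
      simp only
      rw [real_inner_smul_right, real_inner_self_eq_norm_sq, ← hF]
    rw [hmid, edgeC hn (w i), hw i]
    have hun : ‖u i‖^2 = (((n:ℝ)-1)/2)^2 * ‖X' (head i) - X' (tl i)‖^2 := by
      rw [hu]; simp only
      rw [norm_smul, mul_pow, Real.norm_eq_abs, sq_abs]
    rw [hun, ← Nat.cast_smul_eq_nsmul ℝ (n.factorial), smul_eq_mul, ← hF]
    ring
  have hT2sum : ∑ σ : Fin e' → Equiv.Perm (Fin n), ‖∑ a, Y σ a‖^2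
      = F^e' * (‖M‖^2
          + ∑ i, ((((n:ℝ)-1)*(2*(n:ℝ)-1)/6) * (∑ m : Fin n, ‖w i m‖^2)
              + ((n:ℝ)*((n:ℝ)-1)/4 - (2*(n:ℝ)-1)/6) *
                  (‖X' (head i) - X' (tl i)‖^2 - ∑ m : Fin n, ‖w i m‖^2)
              - (((n:ℝ)-1)/2)^2 * ‖X' (head i) - X' (tl i)‖^2)) := by
    have hexp : ∀ σ : Fin e' → Equiv.Perm (Fin n), ‖∑ a, Y σ a‖^2
        = ‖M‖^2 + 2*(⟪M, ∑ i, Z i (σ i)⟫:ℝ) + ‖∑ i, Z i (σ i)‖^2 := by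
      intro σ; rw [hYsum σ]; exact norm_add_sq_real _ _
    rw [Finset.sum_congr rfl fun σ _ => hexp σ]
    simp only [Finset.sum_add_distrib]
    rw [Finset.sum_const, Finset.card_univ]
    have hmid : ∑ σ : Fin e' → Equiv.Perm (Fin n), 2*(⟪M, ∑ i, Z i (σ i)⟫:ℝ) = 0 := by
      have h1 : ∀ σ : Fin e' → Equiv.Perm (Fin n), 2*(⟪M, ∑ i, Z i (σ i)⟫:ℝ)
          = ∑ i, 2*(⟪M, Z i (σ i)⟫:ℝ) := by
        intro σ; rw [inner_sum, Finset.mul_sum]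
      rw [Finset.sum_congr rfl fun σ _ => h1 σ, Finset.sum_comm]
      have h2 : ∀ i, ∑ σ : Fin e' → Equiv.Perm (Fin n), 2*(⟪M, Z i (σ i)⟫:ℝ) = 0 := by
        intro i
        have h3 := sum_fun_apply (ι := Fin e') (G := Equiv.Perm (Fin n)) i
          (fun π => 2*(⟪M, Z i π⟫:ℝ))
        rw [h3, ← Finset.mul_sum, ← inner_sum, hZ0 i, inner_zero_right, mul_zero, smul_zero]
      rw [Finset.sum_congr rfl fun i _ => h2 i, Finset.sum_const, smul_zero]
    rw [hmid, add_zero]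
    have hsq : ∑ σ : Fin e' → Equiv.Perm (Fin n), ‖∑ i, Z i (σ i)‖^2
        = ∑ i, (Fintype.card (Equiv.Perm (Fin n)) ^ (Fintype.card (Fin e') - 1)) •
            ∑ π : Equiv.Perm (Fin n), ‖Z i π‖^2 := by
      have h1 : ∀ σ : Fin e' → Equiv.Perm (Fin n), ‖∑ i, Z i (σ i)‖^2
          = ∑ i, ∑ i', (⟪Z i (σ i), Z i' (σ i')⟫:ℝ) := by
        intro σ
        rw [← real_inner_self_eq_norm_sq, sum_inner]
        exact Finset.sum_congr rfl fun i _ => inner_sum _ _ _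
      rw [Finset.sum_congr rfl fun σ _ => h1 σ, Finset.sum_comm]
      apply Finset.sum_congr rfl
      intro i _
      rw [Finset.sum_comm]
      have h2 : ∀ i', ∑ σ : Fin e' → Equiv.Perm (Fin n), (⟪Z i (σ i), Z i' (σ i')⟫:ℝ)
          = if i' = i then (Fintype.card (Equiv.Perm (Fin n)) ^ (Fintype.card (Fin e') - 1)) •
              ∑ π : Equiv.Perm (Fin n), ‖Z i π‖^2 else 0 := by
        intro i'
        split_ifs with hii
        · subst hii
          simp only [real_inner_self_eq_norm_sq]
          exact sum_fun_apply i' (fun π => ‖Z i' π‖^2)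
        · have hne2 : i ≠ i' := fun h => hii h.symm
          rw [sum_fun_apply_two hne2 (Z i) (Z i'), hZ0 i, inner_zero_left, smul_zero]
      rw [Finset.sum_congr rfl fun i' _ => h2 i', Finset.sum_ite_eq' univ i]
      simp
    rw [hsq, Finset.sum_congr rfl fun i _ => by
      rw [hZvar i, nsmul_eq_mul, hpow1, ← mul_assoc, hFpow]]
    rw [← Finset.mul_sum, nsmul_eq_mul, hCard]
    ring
  -- fiberwise weight lemmas
  have hfibHs : ∑ k, ((univ.filter fun i => head i = k).card : ℝ) * ‖X' k‖^2
      = ∑ i, ‖X' (head i)‖^2 := by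
    rw [← Finset.sum_fiberwise univ head (fun i => ‖X' (head i)‖^2)]
    apply Finset.sum_congr rfl
    intro k _
    rw [Finset.sum_congr rfl fun i hi => by
      rw [(Finset.mem_filter.mp hi).2], Finset.sum_const, nsmul_eq_mul]
  have hfibTs : ∑ k, ((univ.filter fun i => tl i = k).card : ℝ) * ‖X' k‖^2
      = ∑ i, ‖X' (tl i)‖^2 := by
    rw [← Finset.sum_fiberwise univ tl (fun i => ‖X' (tl i)‖^2)]
    apply Finset.sum_congr rfl
    intro k _
    rw [Finset.sum_congr rfl fun i hi => by
      rw [(Finset.mem_filter.mp hi).2], Finset.sum_const, nsmul_eq_mul]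
  have hfibHv : ∑ k, ((univ.filter fun i => head i = k).card : ℝ) • X' k
      = ∑ i, X' (head i) := by
    rw [← Finset.sum_fiberwise univ head (fun i => X' (head i))]
    apply Finset.sum_congr rfl
    intro k _
    rw [Finset.sum_congr rfl fun i hi => by
      rw [(Finset.mem_filter.mp hi).2], Finset.sum_const, Nat.cast_smul_eq_nsmul ℝ]
  have hfibTv : ∑ k, ((univ.filter fun i => tl i = k).card : ℝ) • X' k
      = ∑ i, X' (tl i) := by
    rw [← Finset.sum_fiberwise univ tl (fun i => X' (tl i))]
    apply Finset.sum_congr rfl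
    intro k _
    rw [Finset.sum_congr rfl fun i hi => by
      rw [(Finset.mem_filter.mp hi).2], Finset.sum_const, Nat.cast_smul_eq_nsmul ℝ]
  have hcardH : ∑ k, ((univ.filter fun i => head i = k).card : ℝ) = (e' : ℝ) := by
    rw [← Nat.cast_sum]
    norm_cast
    rw [← Finset.card_eq_sum_card_fiberwise
      (f := head) (t := univ) (fun i _ => Finset.mem_univ _)]
    simp
  have hcardT : ∑ k, ((univ.filter fun i => tl i = k).card : ℝ) = (e' : ℝ) := by
    rw [← Nat.cast_sum]
    norm_cast
    rw [← Finset.card_eq_sum_card_fiberwise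
      (f := tl) (t := univ) (fun i _ => Finset.mem_univ _)]
    simp
  set Ω : Fin v' → ℝ := fun k =>
    (((univ.filter fun i => head i = k).card : ℝ)
      + ((univ.filter fun i => tl i = k).card : ℝ)) + 2 / ((n : ℝ) - 1) with hΩ
  have hΩsum : (∑ k, Ω k) = 2*N/((n:ℝ)-1) := by
    rw [hΩ]
    rw [Finset.sum_add_distrib, Finset.sum_add_distrib, hcardH, hcardT,
      Finset.sum_const, Finset.card_univ, Fintype.card_fin, nsmul_eq_mul, hNdef]
    field_simp
    ring
  have hΩne : (∑ k, Ω k) ≠ 0 := by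
    rw [hΩsum]
    have h1 : 0 < (n:ℝ)-1 := by linarith
    positivity
  have hμX : ∑ k, Ω k • X' k = (2/((n:ℝ)-1)) • M := by
    rw [hΩ]
    simp only
    have hsplit : ∀ k : Fin v', ((((univ.filter fun i => head i = k).card : ℝ)
          + ((univ.filter fun i => tl i = k).card : ℝ)) + 2/((n:ℝ)-1)) • X' k
        = ((univ.filter fun i => head i = k).card : ℝ) • X' k
          + ((univ.filter fun i => tl i = k).card : ℝ) • X' k
          + (2/((n:ℝ)-1)) • X' k := by
      intro k; rw [add_smul, add_smul]
    rw [Finset.sum_congr rfl fun k _ => hsplit k, Finset.sum_add_distrib,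
      Finset.sum_add_distrib, hfibHv, hfibTv, ← Finset.smul_sum]
    rw [hM, smul_add, Finset.smul_sum, Finset.smul_sum]
    have hper : ∀ i, (2/((n:ℝ)-1)) • (((n:ℝ)-1) • X' (tl i) + u i)
        = X' (head i) + X' (tl i) := by
      intro i
      rw [hu]; simp only
      rw [smul_add, smul_smul, smul_smul,
        show (2/((n:ℝ)-1)) * ((n:ℝ)-1) = 2 by field_simp,
        show (2/((n:ℝ)-1)) * (((n:ℝ)-1)/2) = 1 by field_simp,
        one_smul, two_smul]
      abel
    rw [Finset.sum_congr rfl fun i _ => hper i, Finset.sum_add_distrib]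
    abel
  have hcom : com X' Ω = N⁻¹ • M := by
    unfold com
    rw [hμX, hΩsum, smul_smul,
      show (2*N/((n:ℝ)-1))⁻¹ * (2/((n:ℝ)-1)) = N⁻¹ by
        rw [inv_eq_one_div, inv_eq_one_div]; field_simp]
  have hcomsq : ‖com X' Ω‖^2 = N⁻¹^2 * ‖M‖^2 := by
    rw [hcom, norm_smul, mul_pow, Real.norm_eq_abs, sq_abs]
  have hΩX2 : ∑ k, Ω k * ‖X' k‖^2
      = (∑ i, ‖X' (head i)‖^2) + (∑ i, ‖X' (tl i)‖^2)
        + (2/((n:ℝ)-1)) * ∑ k, ‖X' k‖^2 := by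
    rw [hΩ]
    simp only
    rw [Finset.sum_congr rfl fun k _ => show
      ((((univ.filter fun i => head i = k).card : ℝ)
        + ((univ.filter fun i => tl i = k).card : ℝ)) + 2/((n:ℝ)-1)) * ‖X' k‖^2
      = ((univ.filter fun i => head i = k).card : ℝ) * ‖X' k‖^2
        + ((univ.filter fun i => tl i = k).card : ℝ) * ‖X' k‖^2
        + (2/((n:ℝ)-1)) * ‖X' k‖^2 by ring]
    rw [Finset.sum_add_distrib, Finset.sum_add_distrib, hfibHs, hfibTs, ← Finset.mul_sum]
  -- left-hand side per-σ rewrite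
  have hVcard_ne : ((Fintype.card (Fin v' ⊕ Fin e' × Fin (n-1))):ℝ) ≠ 0 := by
    rw [hcardV]; exact hNne
  have hLσ : ∀ σ : Fin e' → Equiv.Perm (Fin n),
      uRg2 (Y σ) = N⁻¹ * (∑ a, ‖Y σ a‖^2) - N⁻¹^2 * ‖∑ a, Y σ a‖^2 := by
    intro σ
    rw [uRg2_eq (Y σ) hVcard_ne, hcardV]
    congr 1
    unfold uMu
    rw [hcardV, norm_smul, mul_pow, Real.norm_eq_abs, sq_abs]
  have hgoalL : ∑ σ : Fin e' → Equiv.Perm (Fin n),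
      uRg2 (Sum.elim X' (fun p : Fin e' × Fin (n-1) => xpos X' tl w σ p.1 p.2))
      = ∑ σ, uRg2 (Y σ) := rfl
  rw [hgoalL, Finset.sum_congr rfl fun σ _ => hLσ σ, Finset.sum_sub_distrib,
    ← Finset.mul_sum, ← Finset.mul_sum, hPsum, hT2sum, hCard]
  rw [rg2_eq X' Ω hΩne, hΩsum, hΩX2, hcomsq]
  have hvarsum : ∑ i, ((((n:ℝ)-1)*(2*(n:ℝ)-1)/6) * (∑ m : Fin n, ‖w i m‖^2)
        + ((n:ℝ)*((n:ℝ)-1)/4 - (2*(n:ℝ)-1)/6) *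
            (‖X' (head i) - X' (tl i)‖^2 - ∑ m : Fin n, ‖w i m‖^2)
        - (((n:ℝ)-1)/2)^2 * ‖X' (head i) - X' (tl i)‖^2)
      = ((((n:ℝ)-1)*(2*(n:ℝ)-1)/6) - ((n:ℝ)*((n:ℝ)-1)/4 - (2*(n:ℝ)-1)/6))
          * (∑ i, ∑ m : Fin n, ‖w i m‖^2)
        + (((n:ℝ)*((n:ℝ)-1)/4 - (2*(n:ℝ)-1)/6) - (((n:ℝ)-1)/2)^2)
          * (∑ i, ‖X' (head i) - X' (tl i)‖^2) := by
    rw [Finset.sum_congr rfl fun i _ => show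
      ((((n:ℝ)-1)*(2*(n:ℝ)-1)/6) * (∑ m : Fin n, ‖w i m‖^2)
        + ((n:ℝ)*((n:ℝ)-1)/4 - (2*(n:ℝ)-1)/6) *
            (‖X' (head i) - X' (tl i)‖^2 - ∑ m : Fin n, ‖w i m‖^2)
        - (((n:ℝ)-1)/2)^2 * ‖X' (head i) - X' (tl i)‖^2)
      = ((((n:ℝ)-1)*(2*(n:ℝ)-1)/6) - ((n:ℝ)*((n:ℝ)-1)/4 - (2*(n:ℝ)-1)/6))
          * (∑ m : Fin n, ‖w i m‖^2)
        + (((n:ℝ)*((n:ℝ)-1)/4 - (2*(n:ℝ)-1)/6) - (((n:ℝ)-1)/2)^2)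
          * ‖X' (head i) - X' (tl i)‖^2 by ring]
    rw [Finset.sum_add_distrib, ← Finset.mul_sum, ← Finset.mul_sum]
  rw [hvarsum]
  have hFpe : F^e' ≠ 0 := pow_ne_zero _ hFne
  field_simp
  ring
end

section
/- Let V be a finite index set, X : V → ℝ^d a position function, and Ω_1, …, Ω_m : V → ℝ_{>0} weight functions with Ω = Σ_{i=1}^m Ω_i. Then Rg²(X,Ω) = Σ_{i=1}^m (|Ω_i|/|Ω|) Rg²(X,Ω_i) + (1/(2|Ω|²)) Σ_{i=1}^m Σ_{j=1}^m |Ω_i||Ω_j| ‖μ(X,Ω_i) − μ(X,Ω_j)‖². -/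
open Finset

section helpers
variable {V : Type*} [Fintype V] {d : ℕ}

lemma com_key (X : V → EuclideanSpace ℝ (Fin d)) (w : V → ℝ) (h : (∑ v, w v) ≠ 0) :
    ∑ v, w v • (X v - com X w) = 0 := by
  simp only [smul_sub, Finset.sum_sub_distrib, ← Finset.sum_smul, com]
  rw [smul_smul, mul_inv_cancel₀ h, one_smul, sub_self]

lemma parallel_axis (X : V → EuclideanSpace ℝ (Fin d)) (w : V → ℝ) (h : (∑ v, w v) ≠ 0)
    (c : EuclideanSpace ℝ (Fin d)) :
    ∑ v, w v * ‖X v - c‖ ^ 2 =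
      (∑ v, w v * ‖X v - com X w‖ ^ 2) + (∑ v, w v) * ‖com X w - c‖ ^ 2 := by
  have h1 : ∀ v, X v - c = (X v - com X w) + (com X w - c) := fun v => by abel
  have h2 : ∑ v, w v * ‖X v - c‖ ^ 2 =
      ∑ v, (w v * ‖X v - com X w‖ ^ 2
        + w v * (2 * inner ℝ (X v - com X w) (com X w - c))
        + w v * ‖com X w - c‖ ^ 2) := by
    refine Finset.sum_congr rfl fun v _ => ?_
    rw [h1 v, norm_add_sq_real]; ring
  rw [h2]
  simp only [Finset.sum_add_distrib]
  have h3 : ∑ v, w v * (2 * inner ℝ (X v - com X w) (com X w - c)) =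
      2 * (inner ℝ (∑ v, w v • (X v - com X w)) (com X w - c) : ℝ) := by
    rw [sum_inner, Finset.mul_sum]
    refine Finset.sum_congr rfl fun v _ => ?_
    rw [real_inner_smul_left]; ring
  rw [h3, com_key X w h, inner_zero_left, mul_zero, add_zero, ← Finset.sum_mul]

end helpers

/-- Splitting formula for the radius of gyration: if `Ω = Σᵢ Ωᵢ`, then
`Rg²(X,Ω) = Σᵢ (|Ωᵢ|/|Ω|) Rg²(X,Ωᵢ)
  + (1/(2|Ω|²)) Σᵢ Σⱼ |Ωᵢ||Ωⱼ| ‖μ(X,Ωᵢ) − μ(X,Ωⱼ)‖²`. -/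
theorem rg2_splitting {V : Type*} [Fintype V] {d m : ℕ}
    (X : V → EuclideanSpace ℝ (Fin d)) (Ω : Fin m → V → ℝ)
    (hΩ : ∀ i v, 0 < Ω i v) :
    rg2 X (fun v => ∑ i, Ω i v) =
      (∑ i, ((∑ v, Ω i v) / (∑ v, ∑ i, Ω i v)) * rg2 X (Ω i)) +
      (1 / (2 * (∑ v, ∑ i, Ω i v) ^ 2)) *
        ∑ i, ∑ j,
          (∑ v, Ω i v) * (∑ v, Ω j v) * ‖com X (Ω i) - com X (Ω j)‖ ^ 2 := by
  by_cases hW : (∑ v, ∑ i, Ω i v) = 0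
  · simp [rg2, hW]
  · have hV : Nonempty V := by
      by_contra h
      rw [not_nonempty_iff] at h
      exact hW (by simp)
    have hWpos : 0 < ∑ v, ∑ i, Ω i v :=
      lt_of_le_of_ne (Finset.sum_nonneg fun v _ => Finset.sum_nonneg fun i _ =>
        (hΩ i v).le) (Ne.symm hW)
    have hWi : ∀ i, 0 < ∑ v, Ω i v := fun i =>
      Finset.sum_pos (fun v _ => hΩ i v) Finset.univ_nonempty
    set W : ℝ := ∑ v, ∑ i, Ω i v with hWdef
    set μ : EuclideanSpace ℝ (Fin d) := com X (fun v => ∑ i, Ω i v) with hμ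
    have hswap : W = ∑ i, ∑ v, Ω i v := Finset.sum_comm
    -- step B
    have stepB : ∀ i, ∑ v, Ω i v * ‖X v - μ‖ ^ 2 =
        (∑ v, Ω i v) * rg2 X (Ω i) + (∑ v, Ω i v) * ‖com X (Ω i) - μ‖ ^ 2 := by
      intro i
      rw [parallel_axis X (Ω i) (hWi i).ne' μ, rg2, ← mul_assoc,
        mul_inv_cancel₀ (hWi i).ne', one_mul]
    -- step C
    have stepC : ∑ i, (∑ v, Ω i v) • com X (Ω i) = W • μ := by
      have h1 : ∀ i, (∑ v, Ω i v) • com X (Ω i) = ∑ v, Ω i v • X v := by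
        intro i
        rw [com, smul_smul, mul_inv_cancel₀ (hWi i).ne', one_smul]
      have h2 : W • μ = ∑ v, (∑ i, Ω i v) • X v := by
        rw [hμ, com, smul_smul, mul_inv_cancel₀ hW, one_smul]
      simp only [h1, h2]
      rw [Finset.sum_comm]
      exact Finset.sum_congr rfl fun v _ => (Finset.sum_smul).symm
    have hz : ∑ i, (∑ v, Ω i v) • (com X (Ω i) - μ) = 0 := by
      simp only [smul_sub, Finset.sum_sub_distrib, ← Finset.sum_smul, ← hswap, stepC,
        sub_self]
    -- generic double-sum lemma
    have hAB : ∀ f : Fin m → ℝ,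
        ∑ i, ∑ j, (∑ v, Ω i v) * (∑ v, Ω j v) * f i
          = W * ∑ i, (∑ v, Ω i v) * f i := by
      intro f
      calc ∑ i, ∑ j, (∑ v, Ω i v) * (∑ v, Ω j v) * f i
          = ∑ i, ((∑ v, Ω i v) * f i) * ∑ j, ∑ v, Ω j v := by
            refine Finset.sum_congr rfl fun i _ => ?_
            rw [Finset.mul_sum]
            exact Finset.sum_congr rfl fun j _ => by ring
        _ = W * ∑ i, (∑ v, Ω i v) * f i := by
            rw [← Finset.sum_mul, ← hswap, mul_comm]
    -- step D
    have stepD : ∑ i, ∑ j, (∑ v, Ω i v) * (∑ v, Ω j v) *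
          ‖com X (Ω i) - com X (Ω j)‖ ^ 2 =
        2 * W * ∑ i, (∑ v, Ω i v) * ‖com X (Ω i) - μ‖ ^ 2 := by
      have expand : ∀ i j, (‖com X (Ω i) - com X (Ω j)‖:ℝ) ^ 2 =
          ‖com X (Ω i) - μ‖ ^ 2 + ‖com X (Ω j) - μ‖ ^ 2
            - 2 * inner ℝ (com X (Ω i) - μ) (com X (Ω j) - μ) := by
        intro i j
        have h3 : com X (Ω i) - com X (Ω j) = (com X (Ω i) - μ) - (com X (Ω j) - μ) := by
          abel
        rw [h3, norm_sub_sq_real]; ring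
      have hC : ∑ i, ∑ j, (2 * inner ℝ ((∑ v, Ω i v) • (com X (Ω i) - μ))
            ((∑ v, Ω j v) • (com X (Ω j) - μ)) : ℝ)
          = 2 * (inner ℝ (∑ i, (∑ v, Ω i v) • (com X (Ω i) - μ))
              (∑ j, (∑ v, Ω j v) • (com X (Ω j) - μ)) : ℝ) := by
        simp only [sum_inner, inner_sum, Finset.mul_sum]
        exact Finset.sum_comm
      have hB : ∑ i, ∑ j, (∑ v, Ω i v) * (∑ v, Ω j v) * ‖com X (Ω j) - μ‖ ^ 2
          = W * ∑ i, (∑ v, Ω i v) * ‖com X (Ω i) - μ‖ ^ 2 := by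
        rw [Finset.sum_comm]
        rw [← hAB fun j => ‖com X (Ω j) - μ‖ ^ 2]
        exact Finset.sum_congr rfl fun j _ => Finset.sum_congr rfl fun i _ => by ring
      calc ∑ i, ∑ j, (∑ v, Ω i v) * (∑ v, Ω j v) * ‖com X (Ω i) - com X (Ω j)‖ ^ 2
          = ∑ i, ∑ j, ((∑ v, Ω i v) * (∑ v, Ω j v) * ‖com X (Ω i) - μ‖ ^ 2
            + (∑ v, Ω i v) * (∑ v, Ω j v) * ‖com X (Ω j) - μ‖ ^ 2
            - 2 * inner ℝ ((∑ v, Ω i v) • (com X (Ω i) - μ))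
                ((∑ v, Ω j v) • (com X (Ω j) - μ))) := by
            refine Finset.sum_congr rfl fun i _ => Finset.sum_congr rfl fun j _ => ?_
            rw [expand i j, real_inner_smul_left, real_inner_smul_right]; ring
        _ = 2 * W * ∑ i, (∑ v, Ω i v) * ‖com X (Ω i) - μ‖ ^ 2 := by
            simp only [Finset.sum_sub_distrib, Finset.sum_add_distrib]
            rw [hC, hz, inner_zero_left, mul_zero, sub_zero,
              hAB fun i => ‖com X (Ω i) - μ‖ ^ 2, hB]
            ring
    -- assemble
    rw [stepD]
    have e1 : rg2 X (fun v => ∑ i, Ω i v)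
        = W⁻¹ * ((∑ i, (∑ v, Ω i v) * rg2 X (Ω i))
            + ∑ i, (∑ v, Ω i v) * ‖com X (Ω i) - μ‖ ^ 2) := by
      rw [rg2, ← hμ, ← hWdef]
      congr 1
      calc ∑ v, (∑ i, Ω i v) * ‖X v - μ‖ ^ 2
          = ∑ v, ∑ i, Ω i v * ‖X v - μ‖ ^ 2 := by
            exact Finset.sum_congr rfl fun v _ => Finset.sum_mul ..
        _ = ∑ i, ∑ v, Ω i v * ‖X v - μ‖ ^ 2 := Finset.sum_comm
        _ = _ := by
            simp only [stepB, Finset.sum_add_distrib]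
    rw [e1]
    have e2 : ∑ i, ((∑ v, Ω i v) / W) * rg2 X (Ω i)
        = W⁻¹ * ∑ i, (∑ v, Ω i v) * rg2 X (Ω i) := by
      rw [Finset.mul_sum]
      exact Finset.sum_congr rfl fun i _ => by ring
    rw [e2]
    field_simp
end

section
/- Let G be the graph obtained from G' by subdividing each edge into n pieces, with vertices the junctions v_{0,1},…,v_{0,v'} and intermediate vertices v_{i,j} (i ∈ Fin e', j ∈ {1,…,n−1}), v = v' + (n−1)e' vertices in total. Let X be any assignment of positions in ℝ^d to the vertices of G, let X_i = (x_{i,1},…,x_{i,n−1}) be the point cloud of intermediate positions on edge i, and let X' = (x_{0,1},…,x_{0,v'}) be the point cloud of junction positions, all with unit weights. Then Rg²(X) = ((n−1)/v) Σ_{i=1}^{e'} Rg²(X_i) + (v'/v)·Rg²(X') + ((n−1)²/(2v²)) Σ_{i=1}^{e'} Σ_{j=1}^{e'} ‖μ(X_i) − μ(X_j)‖² + ((n−1)v'/v²) Σ_{i=1}^{e'} ‖μ(X_i) − μ(X')‖². -/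
open Finset

lemma uMu_sum {V : Type*} [Fintype V] {d : ℕ} (h : 0 < Fintype.card V)
    (X : V → EuclideanSpace ℝ (Fin d)) :
    ∑ v, X v = (Fintype.card V : ℝ) • uMu X := by
  rw [uMu, smul_smul, mul_inv_cancel₀ (Nat.cast_ne_zero.mpr h.ne'), one_smul]

lemma key_expand {S T : Type*} [Fintype S] [Fintype T] {d : ℕ}
    (f : S → EuclideanSpace ℝ (Fin d)) (g : T → EuclideanSpace ℝ (Fin d)) :
    ∑ s, ∑ t, ‖f s - g t‖ ^ 2 =
      (Fintype.card T : ℝ) * ∑ s, ‖f s‖ ^ 2 + (Fintype.card S : ℝ) * ∑ t, ‖g t‖ ^ 2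
        - 2 * inner ℝ (∑ s, f s) (∑ t, g t) := by
  have expand : ∀ (a b : EuclideanSpace ℝ (Fin d)),
      ‖a - b‖ ^ 2 = ‖a‖ ^ 2 - 2 * inner ℝ a b + ‖b‖ ^ 2 := by
    intro a b; exact norm_sub_sq_real _ _
  have hIP : ∑ s, ∑ t, (inner ℝ (f s) (g t) : ℝ) = inner ℝ (∑ s, f s) (∑ t, g t) := by
    rw [sum_inner]
    exact Finset.sum_congr rfl fun s _ => (inner_sum _ _ _).symm
  have step : ∀ s, ∑ t, ‖f s - g t‖ ^ 2 =
      (Fintype.card T : ℝ) * ‖f s‖ ^ 2 + ∑ t, ‖g t‖ ^ 2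
        - 2 * ∑ t, (inner ℝ (f s) (g t) : ℝ) := by
    intro s
    simp only [expand, Finset.sum_add_distrib, Finset.sum_sub_distrib, Finset.sum_const,
      Finset.mul_sum, card_univ, nsmul_eq_mul]
    ring
  rw [Finset.sum_congr rfl fun s _ => step s]
  simp only [Finset.sum_add_distrib, Finset.sum_sub_distrib, Finset.sum_const, card_univ,
    nsmul_eq_mul, ← Finset.mul_sum, ← Finset.sum_mul]
  rw [hIP]

lemma sum_dev_sq {A : Type*} [Fintype A] {d : ℕ} (hA : 0 < Fintype.card A)
    (X : A → EuclideanSpace ℝ (Fin d)) :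
    ∑ a, ‖X a - uMu X‖ ^ 2 = (∑ a, ‖X a‖ ^ 2) - (Fintype.card A : ℝ) * ‖uMu X‖ ^ 2 := by
  have expand : ∀ a, ‖X a - uMu X‖ ^ 2
      = ‖X a‖ ^ 2 - 2 * inner ℝ (X a) (uMu X) + ‖uMu X‖ ^ 2 := by
    intro a; exact norm_sub_sq_real _ _
  have hsum : ∑ a, (inner ℝ (X a) (uMu X) : ℝ) = (Fintype.card A : ℝ) * ‖uMu X‖ ^ 2 := by
    rw [← sum_inner, uMu_sum hA X, real_inner_smul_left, real_inner_self_eq_norm_sq]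
  simp only [expand, Finset.sum_add_distrib, Finset.sum_sub_distrib, Finset.sum_const,
    card_univ, nsmul_eq_mul, ← Finset.mul_sum, hsum]
  ring

lemma cross_sum {A B : Type*} [Fintype A] [Fintype B] {d : ℕ}
    (hA : 0 < Fintype.card A) (hB : 0 < Fintype.card B)
    (X : A → EuclideanSpace ℝ (Fin d)) (Y : B → EuclideanSpace ℝ (Fin d)) :
    ∑ a, ∑ b, ‖X a - Y b‖ ^ 2 =
      (Fintype.card B : ℝ) * ∑ a, ‖X a - uMu X‖ ^ 2 +
      (Fintype.card A : ℝ) * ∑ b, ‖Y b - uMu Y‖ ^ 2 +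
      (Fintype.card A : ℝ) * (Fintype.card B : ℝ) * ‖uMu X - uMu Y‖ ^ 2 := by
  rw [key_expand, sum_dev_sq hA, sum_dev_sq hB, uMu_sum hA X, uMu_sum hB Y,
    real_inner_smul_left, real_inner_smul_right]
  have h2 : ‖uMu X - uMu Y‖ ^ 2
      = ‖uMu X‖ ^ 2 - 2 * inner ℝ (uMu X) (uMu Y) + ‖uMu Y‖ ^ 2 :=
    norm_sub_sq_real _ _
  rw [h2]
  ring

/-- Splitting formula for the squared radius of gyration of an embedding of the
subdivision graph `G` (junction vertices indexed by `Fin v'`, intermediate vertices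
by `Fin e' × Fin (n−1)`), in terms of the intermediate clouds on each edge and the
junction cloud. -/
theorem rg2_subdivision_splitting {d n v' e' : ℕ}
    (hd : 1 ≤ d) (hn : 2 ≤ n) (hv' : 1 ≤ v') (he' : 1 ≤ e')
    (X : (Fin v' ⊕ Fin e' × Fin (n - 1)) → EuclideanSpace ℝ (Fin d)) :
    uRg2 X =
      (((n : ℝ) - 1) / ((v' : ℝ) + ((n : ℝ) - 1) * (e' : ℝ))) *
          (∑ i : Fin e', uRg2 (fun j : Fin (n - 1) => X (Sum.inr (i, j)))) +
        ((v' : ℝ) / ((v' : ℝ) + ((n : ℝ) - 1) * (e' : ℝ))) *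
          uRg2 (fun k : Fin v' => X (Sum.inl k)) +
        (((n : ℝ) - 1) ^ 2 / (2 * ((v' : ℝ) + ((n : ℝ) - 1) * (e' : ℝ)) ^ 2)) *
          (∑ i : Fin e', ∑ j : Fin e',
            ‖uMu (fun k : Fin (n - 1) => X (Sum.inr (i, k)))
              - uMu (fun k : Fin (n - 1) => X (Sum.inr (j, k)))‖ ^ 2) +
        (((n : ℝ) - 1) * (v' : ℝ) / ((v' : ℝ) + ((n : ℝ) - 1) * (e' : ℝ)) ^ 2) *
          (∑ i : Fin e',
            ‖uMu (fun k : Fin (n - 1) => X (Sum.inr (i, k)))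
              - uMu (fun k : Fin v' => X (Sum.inl k))‖ ^ 2) := by
  have hm1 : 1 ≤ n - 1 := by omega
  set Y : Fin v' → EuclideanSpace ℝ (Fin d) := fun k => X (Sum.inl k) with hYdef
  set Z : Fin e' → Fin (n - 1) → EuclideanSpace ℝ (Fin d) :=
    fun i j => X (Sum.inr (i, j)) with hZdef
  -- cardinalities
  have hcV : 0 < Fintype.card (Fin v' ⊕ Fin e' × Fin (n - 1)) := by
    simp [Fintype.card_sum]; omega
  have hcv : 0 < Fintype.card (Fin v') := by simp; omega
  have hce : 0 < Fintype.card (Fin e') := by simp; omega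
  have hcm : 0 < Fintype.card (Fin (n - 1)) := by simp [Fintype.card_fin]; omega
  -- scalar abbreviations
  set mc : ℝ := ((n - 1 : ℕ) : ℝ) with hmc
  set vc : ℝ := (v' : ℝ) with hvc
  set ec : ℝ := (e' : ℝ) with hec
  have hmcast : ((n : ℝ) - 1) = mc := by
    rw [hmc, Nat.cast_sub (by omega)]; simp
  set Nc : ℝ := vc + mc * ec with hNc
  have hmpos : (0:ℝ) < mc := by rw [hmc]; exact_mod_cast hm1
  have hvpos : (0:ℝ) < vc := by rw [hvc]; exact_mod_cast hv'
  have hepos : (0:ℝ) < ec := by rw [hec]; exact_mod_cast he'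
  have hNpos : (0:ℝ) < Nc := by rw [hNc]; positivity
  set D : ℝ := ∑ v, ‖X v - uMu X‖ ^ 2 with hDdef
  set D' : ℝ := ∑ k, ‖Y k - uMu Y‖ ^ 2 with hD'def
  set Di : Fin e' → ℝ := fun i => ∑ l, ‖Z i l - uMu (Z i)‖ ^ 2 with hDidef
  set P : ℝ := ∑ i, ∑ j, ‖uMu (Z i) - uMu (Z j)‖ ^ 2 with hPdef
  set Q : ℝ := ∑ i, ‖uMu (Z i) - uMu Y‖ ^ 2 with hQdef
  -- the master double-sum identity
  have hbig0 := cross_sum hcV hcV X X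
  have hNcard : ((Fintype.card (Fin v' ⊕ Fin e' × Fin (n - 1)) : ℕ) : ℝ) = Nc := by
    simp [Fintype.card_sum, hNc, hvc, hmc, hec]; push_cast; ring
  rw [sub_self, norm_zero] at hbig0
  -- split the double sum into four blocks
  have hsplit : ∑ u, ∑ v, ‖X u - X v‖ ^ 2 =
      (∑ k, ∑ l, ‖Y k - Y l‖ ^ 2) +
      (∑ k, ∑ i, ∑ l, ‖Y k - Z i l‖ ^ 2) +
      (∑ i, ∑ l, ∑ k, ‖Z i l - Y k‖ ^ 2) +
      (∑ i, ∑ l, ∑ j, ∑ p, ‖Z i l - Z j p‖ ^ 2) := by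
    simp only [Fintype.sum_sum_type, Fintype.sum_prod_type, Finset.sum_add_distrib]
    ring
  have hB11 := cross_sum hcv hcv Y Y
  rw [sub_self, norm_zero] at hB11
  have hB12 : (∑ k, ∑ i, ∑ l, ‖Y k - Z i l‖ ^ 2) =
      ∑ i, (mc * D' + vc * Di i + vc * mc * ‖uMu Y - uMu (Z i)‖ ^ 2) := by
    rw [Finset.sum_comm]
    refine Finset.sum_congr rfl fun i _ => ?_
    have := cross_sum hcv hcm Y (Z i)
    simpa [hvc, hmc, hD'def, hDidef] using this
  have hB21 : (∑ i, ∑ l, ∑ k, ‖Z i l - Y k‖ ^ 2) =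
      ∑ i, (vc * Di i + mc * D' + mc * vc * ‖uMu (Z i) - uMu Y‖ ^ 2) := by
    refine Finset.sum_congr rfl fun i _ => ?_
    have := cross_sum hcm hcv (Z i) Y
    simpa [hvc, hmc, hD'def, hDidef] using this
  have hB22 : (∑ i, ∑ l, ∑ j, ∑ p, ‖Z i l - Z j p‖ ^ 2) =
      ∑ i, ∑ j, (mc * Di i + mc * Di j + mc * mc * ‖uMu (Z i) - uMu (Z j)‖ ^ 2) := by
    refine Finset.sum_congr rfl fun i _ => ?_
    rw [Finset.sum_comm]
    refine Finset.sum_congr rfl fun j _ => ?_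
    have := cross_sum hcm hcm (Z i) (Z j)
    simpa [hmc, hDidef] using this
  -- symmetric norm in hB12
  have hB12' : (∑ k, ∑ i, ∑ l, ‖Y k - Z i l‖ ^ 2) =
      ∑ i, (mc * D' + vc * Di i + vc * mc * ‖uMu (Z i) - uMu Y‖ ^ 2) := by
    rw [hB12]
    exact Finset.sum_congr rfl fun i _ => by rw [norm_sub_rev]
  -- assemble the scalar identity
  have hbig : 2 * Nc * D =
      2 * vc * D' + (ec * (mc * D') + vc * (∑ i, Di i) + vc * mc * Q) +
        (vc * (∑ i, Di i) + ec * (mc * D') + mc * vc * Q) +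
        (ec * mc * (∑ i, Di i) + ec * mc * (∑ i, Di i) + mc * mc * P) := by
    have h1 : ∑ u, ∑ v, ‖X u - X v‖ ^ 2 = 2 * Nc * D := by
      rw [hbig0, hNcard]; ring
    rw [← h1, hsplit, hB11, hB12', hB21, hB22]
    simp only [Finset.sum_add_distrib, Finset.sum_const, card_univ, Fintype.card_fin,
      nsmul_eq_mul, ← Finset.mul_sum, ← Finset.sum_mul, hQdef, hPdef, hec, hvc, hmc]
    push_cast
    ring
  -- unfold uRg2 everywhere
  have hRg : uRg2 X = Nc⁻¹ * D := by rw [uRg2, hNcard, hDdef]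
  have hRgY : uRg2 Y = vc⁻¹ * D' := by
    rw [uRg2, hD'def, hvc]; simp
  have hRgZ : ∀ i, uRg2 (Z i) = mc⁻¹ * Di i := by
    intro i; rw [uRg2, hDidef, hmc]; simp
  have hZi : ∀ i : Fin e', (fun j : Fin (n - 1) => X (Sum.inr (i, j))) = Z i := fun _ => rfl
  simp only [hZi]
  rw [hmcast, ← hNc, hRg, hRgY,
    Finset.sum_congr rfl fun i _ => hRgZ i, ← Finset.mul_sum]
  have hD : D = (2*Nc)⁻¹ * (2 * vc * D' + (ec * (mc * D') + vc * (∑ i, Di i) + vc * mc * Q) +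
        (vc * (∑ i, Di i) + ec * (mc * D') + mc * vc * Q) +
        (ec * mc * (∑ i, Di i) + ec * mc * (∑ i, Di i) + mc * mc * P)) := by
    rw [← hbig]
    field_simp
  rw [hD]
  field_simp
  ring
end

section
/- With the subdivision setup below, for n ≥ 2 and each fixed i ∈ Fin e', the average over σ ∈ S of the squared radius of gyration of the intermediate point cloud X^σ_i = (x^σ_{i,1},…,x^σ_{i,n−1}) satisfies (1/#S) Σ_{σ∈S} Rg²(X^σ_i) = (n(n+1)(n−2)/(12(n−1)²))·Rg²(W_i) + ((n−2)/(12n))·‖w'_i‖², where W_i = (w(i,1),…,w(i,n)) is regarded as a point cloud in ℝ^d with unit weights. -/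
open Finset
open Equiv
open scoped InnerProductSpace

lemma uMu_const_add {V : Type*} [Fintype V] [Nonempty V] {d : ℕ}
    (c : EuclideanSpace ℝ (Fin d)) (f : V → EuclideanSpace ℝ (Fin d)) :
    uMu (fun v => c + f v) = c + uMu f := by
  have hc : (Fintype.card V : ℝ) ≠ 0 := by
    simp [Fintype.card_ne_zero]
  simp only [uMu, Finset.sum_add_distrib, Finset.sum_const, card_univ, smul_add]
  rw [← Nat.cast_smul_eq_nsmul ℝ, smul_smul, inv_mul_cancel₀ hc, one_smul]

lemma uRg2_const_add {V : Type*} [Fintype V] [Nonempty V] {d : ℕ}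
    (c : EuclideanSpace ℝ (Fin d)) (f : V → EuclideanSpace ℝ (Fin d)) :
    uRg2 (fun v => c + f v) = uRg2 f := by
  unfold uRg2
  rw [uMu_const_add]
  congr 1
  refine Finset.sum_congr rfl fun v _ => ?_
  have : c + f v - (c + uMu f) = f v - uMu f := by abel
  rw [this]

lemma uRg2_eq_inner {V : Type*} [Fintype V] {d : ℕ}
    (h : (Fintype.card V : ℝ) ≠ 0) (X : V → EuclideanSpace ℝ (Fin d)) :
    uRg2 X = (Fintype.card V : ℝ)⁻¹ * ∑ v, ⟪X v, X v⟫_ℝ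
      - ((Fintype.card V : ℝ)⁻¹) ^ 2 * ∑ v, ∑ u, ⟪X v, X u⟫_ℝ := by
  set m : ℝ := (Fintype.card V : ℝ) with hm
  set S : EuclideanSpace ℝ (Fin d) := ∑ v, X v with hS
  have hP : ∑ v, ∑ u, ⟪X v, X u⟫_ℝ = ⟪S, S⟫_ℝ := by
    rw [hS, sum_inner]
    exact Finset.sum_congr rfl fun v _ => (inner_sum _ _ _).symm
  have hterm : ∀ v, ‖X v - uMu X‖ ^ 2
      = ⟪X v, X v⟫_ℝ - 2 * (m⁻¹ * ⟪X v, S⟫_ℝ) + m⁻¹ * (m⁻¹ * ⟪S, S⟫_ℝ) := by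
    intro v
    have hmu : uMu X = m⁻¹ • S := rfl
    rw [norm_sub_sq_real, ← real_inner_self_eq_norm_sq, ← real_inner_self_eq_norm_sq,
      hmu, real_inner_smul_right, real_inner_smul_left, real_inner_smul_right]
  have hsum : ∑ v, ‖X v - uMu X‖ ^ 2
      = (∑ v, ⟪X v, X v⟫_ℝ) - 2 * (m⁻¹ * ⟪S, S⟫_ℝ) + m * (m⁻¹ * (m⁻¹ * ⟪S, S⟫_ℝ)) := by
    rw [Finset.sum_congr rfl fun v _ => hterm v, Finset.sum_add_distrib,
      Finset.sum_sub_distrib, Finset.sum_const, card_univ]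
    have : ∑ v, 2 * (m⁻¹ * ⟪X v, S⟫_ℝ) = 2 * (m⁻¹ * ⟪S, S⟫_ℝ) := by
      rw [← Finset.mul_sum, ← Finset.mul_sum, hS, sum_inner]
    rw [this, nsmul_eq_mul]
  rw [uRg2, hsum, hP]
  rw [← hm]
  field_simp
  ring

lemma sum_pi_eval {G : Type*} [Fintype G] {e' : ℕ} (i : Fin e') (F : G → ℝ) :
    (Fintype.card G : ℝ) * ∑ σ : Fin e' → G, F (σ i)
      = (Fintype.card (Fin e' → G) : ℝ) * ∑ τ : G, F τ := by
  classical
  have h1 : ∑ σ : Fin e' → G, F (σ i)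
      = ∑ p : G × ({ j // j ≠ i } → G), F (((Equiv.funSplitAt i G).symm p) i) :=
    (Equiv.sum_comp (Equiv.funSplitAt i G).symm (fun σ => F (σ i))).symm
  have h2 : ∀ p : G × ({ j // j ≠ i } → G), ((Equiv.funSplitAt i G).symm p) i = p.1 := by
    intro p; simp [Equiv.funSplitAt, Equiv.piSplitAt]
  have hcard : (Fintype.card (Fin e' → G) : ℝ)
      = (Fintype.card G : ℝ) * (Fintype.card ({ j // j ≠ i } → G) : ℝ) := by
    rw [← Nat.cast_mul, ← Fintype.card_prod, Fintype.card_congr (Equiv.funSplitAt i G)]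
  rw [h1, Finset.sum_congr rfl fun p _ => by rw [h2 p], Fintype.sum_prod_type]
  simp only [Finset.sum_const, card_univ, nsmul_eq_mul]
  rw [← Finset.mul_sum, hcard]
  ring

lemma card_le_filter {n : ℕ} (t : ℕ) (ht : t < n) :
    ((Finset.univ : Finset (Fin n)).filter (fun k : Fin n => (k : ℕ) ≤ t)).card = t + 1 := by
  have h : ((Finset.univ : Finset (Fin n)).filter (fun k : Fin n => (k : ℕ) ≤ t))
      = Finset.map ⟨Fin.castLE (by omega : t + 1 ≤ n), Fin.castLE_injective _⟩ Finset.univ := by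
    ext k
    simp only [Finset.mem_filter, Finset.mem_univ, true_and, Finset.mem_map,
      Function.Embedding.coeFn_mk]
    constructor
    · intro hk
      exact ⟨⟨(k : ℕ), by omega⟩, by ext; simp⟩
    · rintro ⟨a, rfl⟩
      simpa using Nat.lt_succ_iff.mp a.2
  rw [h, Finset.card_map, Finset.card_univ, Fintype.card_fin]

lemma sum_range_id' (m : ℕ) : ∑ x ∈ Finset.range m, ((x : ℝ) + 1) = (m : ℝ) * ((m : ℝ) + 1) / 2 := by
  induction m with
  | zero => simp
  | succ m ih => rw [Finset.sum_range_succ, ih]; push_cast; ring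

lemma sum_range_sq' (m : ℕ) :
    ∑ x ∈ Finset.range m, ((x : ℝ) + 1) ^ 2 = (m : ℝ) * ((m : ℝ) + 1) * (2 * (m : ℝ) + 1) / 6 := by
  induction m with
  | zero => simp
  | succ m ih => rw [Finset.sum_range_succ, ih]; push_cast; ring

lemma sum_range_min' (m : ℕ) :
    ∑ x ∈ Finset.range m, ∑ y ∈ Finset.range m, (((min x y : ℕ) : ℝ) + 1)
      = (m : ℝ) * ((m : ℝ) + 1) * (2 * (m : ℝ) + 1) / 6 := by
  induction m with
  | zero => simp
  | succ m ih =>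
    rw [Finset.sum_range_succ]
    have hrow : ∀ x ∈ Finset.range m, ∑ y ∈ Finset.range (m + 1), (((min x y : ℕ) : ℝ) + 1)
        = (∑ y ∈ Finset.range m, (((min x y : ℕ) : ℝ) + 1)) + ((x : ℝ) + 1) := by
      intro x hx
      rw [Finset.sum_range_succ]
      congr 2
      rw [min_eq_left (le_of_lt (Finset.mem_range.mp hx))]
    rw [Finset.sum_congr rfl hrow, Finset.sum_add_distrib, ih, sum_range_id']
    have hlast : ∑ y ∈ Finset.range (m + 1), (((min m y : ℕ) : ℝ) + 1)
        = (∑ y ∈ Finset.range m, ((y : ℝ) + 1)) + ((m : ℝ) + 1) := by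
      rw [Finset.sum_range_succ, min_self]
      congr 1
      refine Finset.sum_congr rfl fun y hy => ?_
      rw [min_eq_right (le_of_lt (Finset.mem_range.mp hy))]
    rw [hlast, sum_range_id']
    push_cast; ring

lemma perm_sum_eval_congr {n : ℕ} (f : Fin n → ℝ) (k k' : Fin n) :
    ∑ τ : Equiv.Perm (Fin n), f (τ k) = ∑ τ : Equiv.Perm (Fin n), f (τ k') := by
  calc ∑ τ : Equiv.Perm (Fin n), f (τ k)
      = ∑ τ : Equiv.Perm (Fin n), f (((Equiv.mulRight (Equiv.swap k k')) τ) k') := by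
        refine Finset.sum_congr rfl fun τ _ => ?_
        simp [Equiv.Perm.mul_apply, Equiv.swap_apply_right]
    _ = ∑ τ : Equiv.Perm (Fin n), f (τ k') :=
        Equiv.sum_comp (Equiv.mulRight (Equiv.swap k k')) (fun τ => f (τ k'))

lemma perm_sum_eval₁ {n : ℕ} (f : Fin n → ℝ) (k : Fin n) :
    (n : ℝ) * ∑ τ : Equiv.Perm (Fin n), f (τ k)
      = (n.factorial : ℝ) * ∑ p, f p := by
  have h1 : ∑ k' : Fin n, ∑ τ : Equiv.Perm (Fin n), f (τ k')
      = (n : ℝ) * ∑ τ : Equiv.Perm (Fin n), f (τ k) := by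
    rw [Finset.sum_congr rfl fun k' _ => perm_sum_eval_congr f k' k]
    simp [Finset.sum_const, card_univ, mul_comm]
  rw [← h1, Finset.sum_comm]
  have h2 : ∀ τ : Equiv.Perm (Fin n), ∑ k' : Fin n, f (τ k') = ∑ p, f p :=
    fun τ => Equiv.sum_comp τ f
  rw [Finset.sum_congr rfl fun τ _ => h2 τ]
  simp [Finset.sum_const, card_univ, Fintype.card_perm]

lemma exists_perm_two {n : ℕ} {k l k' l' : Fin n} (hkl : k ≠ l) (hkl' : k' ≠ l') :
    ∃ π : Equiv.Perm (Fin n), π k' = k ∧ π l' = l := by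
  refine ⟨(Equiv.swap ((Equiv.swap k' k) l') l) * (Equiv.swap k' k), ?_, ?_⟩
  · rw [Equiv.Perm.mul_apply, Equiv.swap_apply_left]
    have h1 : k ≠ (Equiv.swap k' k) l' := by
      intro h
      have h2 := congrArg (Equiv.swap k' k) h
      rw [Equiv.swap_apply_self, Equiv.swap_apply_right] at h2
      exact hkl' h2
    exact Equiv.swap_apply_of_ne_of_ne h1 hkl
  · rw [Equiv.Perm.mul_apply, Equiv.swap_apply_left]

lemma perm_sum_eval_congr₂ {n : ℕ} (g : Fin n → Fin n → ℝ) {k l k' l' : Fin n}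
    (hkl : k ≠ l) (hkl' : k' ≠ l') :
    ∑ τ : Equiv.Perm (Fin n), g (τ k) (τ l) = ∑ τ : Equiv.Perm (Fin n), g (τ k') (τ l') := by
  obtain ⟨π, hπk, hπl⟩ := exists_perm_two hkl hkl'
  calc ∑ τ : Equiv.Perm (Fin n), g (τ k) (τ l)
      = ∑ τ : Equiv.Perm (Fin n), g (((Equiv.mulRight π) τ) k') (((Equiv.mulRight π) τ) l') := by
        refine Finset.sum_congr rfl fun τ _ => ?_
        simp [Equiv.Perm.mul_apply, hπk, hπl]
    _ = ∑ τ : Equiv.Perm (Fin n), g (τ k') (τ l') :=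
        Equiv.sum_comp (Equiv.mulRight π) (fun τ => g (τ k') (τ l'))

lemma perm_sum_eval₂ {n : ℕ} (g : Fin n → Fin n → ℝ) {k l : Fin n} (hkl : k ≠ l) :
    ((n : ℝ) * ((n : ℝ) - 1)) * ∑ τ : Equiv.Perm (Fin n), g (τ k) (τ l)
      = (n.factorial : ℝ) * ((∑ p, ∑ q, g p q) - ∑ p, g p p) := by
  classical
  have hsplit : ∑ p ∈ (Finset.univ : Finset (Fin n)) ×ˢ Finset.univ,
        (∑ τ : Equiv.Perm (Fin n), g (τ p.1) (τ p.2))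
      = (∑ p ∈ (Finset.univ : Finset (Fin n)).diag,
          (∑ τ : Equiv.Perm (Fin n), g (τ p.1) (τ p.2)))
        + ∑ p ∈ (Finset.univ : Finset (Fin n)).offDiag,
          (∑ τ : Equiv.Perm (Fin n), g (τ p.1) (τ p.2)) := by
    rw [← Finset.diag_union_offDiag, Finset.sum_union (Finset.disjoint_diag_offDiag _)]
  have hfull : ∑ p ∈ (Finset.univ : Finset (Fin n)) ×ˢ Finset.univ,
        (∑ τ : Equiv.Perm (Fin n), g (τ p.1) (τ p.2))
      = (n.factorial : ℝ) * ∑ p, ∑ q, g p q := by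
    rw [Finset.sum_comm]
    have h : ∀ τ : Equiv.Perm (Fin n),
        ∑ p ∈ (Finset.univ : Finset (Fin n)) ×ˢ Finset.univ, g (τ p.1) (τ p.2)
          = ∑ p, ∑ q, g p q := by
      intro τ
      rw [Finset.sum_product]
      rw [Finset.sum_congr rfl fun k' _ => Equiv.sum_comp τ (g (τ k'))]
      exact Equiv.sum_comp τ (fun p => ∑ q, g p q)
    rw [Finset.sum_congr rfl fun τ _ => h τ]
    simp [Finset.sum_const, card_univ, Fintype.card_perm, mul_comm]
  have hdiag : ∑ p ∈ (Finset.univ : Finset (Fin n)).diag,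
        (∑ τ : Equiv.Perm (Fin n), g (τ p.1) (τ p.2))
      = (n.factorial : ℝ) * ∑ p, g p p := by
    rw [Finset.sum_diag, Finset.sum_comm]
    rw [Finset.sum_congr rfl fun τ _ => Equiv.sum_comp τ (fun p => g p p)]
    simp [Finset.sum_const, card_univ, Fintype.card_perm, mul_comm]
  have hoff : ∑ p ∈ (Finset.univ : Finset (Fin n)).offDiag,
        (∑ τ : Equiv.Perm (Fin n), g (τ p.1) (τ p.2))
      = ((n : ℝ) * (n : ℝ) - (n : ℝ)) * ∑ τ : Equiv.Perm (Fin n), g (τ k) (τ l) := by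
    have h : ∀ p ∈ (Finset.univ : Finset (Fin n)).offDiag,
        (∑ τ : Equiv.Perm (Fin n), g (τ p.1) (τ p.2))
          = ∑ τ : Equiv.Perm (Fin n), g (τ k) (τ l) := by
      intro p hp
      exact perm_sum_eval_congr₂ g (Finset.mem_offDiag.mp hp).2.2 hkl
    rw [Finset.sum_congr rfl h, Finset.sum_const, Finset.offDiag_card, card_univ,
      Fintype.card_fin, nsmul_eq_mul]
    have hle : n ≤ n * n := by nlinarith
    rw [Nat.cast_sub hle, Nat.cast_mul]
  rw [hfull, hdiag, hoff] at hsplit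
  linear_combination -hsplit

lemma perm_inner_moment {n d : ℕ} (a : Fin n → EuclideanSpace ℝ (Fin d)) (k l : Fin n) :
    ∑ τ : Equiv.Perm (Fin n), ⟪a (τ k), a (τ l)⟫_ℝ
      = if k = l then (n.factorial : ℝ) / n * ∑ p, ⟪a p, a p⟫_ℝ
        else (n.factorial : ℝ) / ((n : ℝ) * ((n : ℝ) - 1)) *
          ((∑ p, ∑ q, ⟪a p, a q⟫_ℝ) - ∑ p, ⟪a p, a p⟫_ℝ) := by
  have hn0 : 0 < n := k.pos
  split_ifs with h
  · subst h
    have h1 := perm_sum_eval₁ (fun p => ⟪a p, a p⟫_ℝ) k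
    have hn : (n : ℝ) ≠ 0 := Nat.cast_ne_zero.mpr hn0.ne'
    rw [div_mul_eq_mul_div, eq_div_iff hn]
    linear_combination h1
  · have hn2 : 2 ≤ n := by
      have h1 : (k : ℕ) ≠ (l : ℕ) := fun hc => h (Fin.ext hc)
      have h2 : (k : ℕ) < n := k.2
      have h3 : (l : ℕ) < n := l.2
      omega
    have h1 := perm_sum_eval₂ (fun p q => ⟪a p, a q⟫_ℝ) h
    have hn : (n : ℝ) ≠ 0 := Nat.cast_ne_zero.mpr hn0.ne'
    have hn1 : (n : ℝ) - 1 ≠ 0 := by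
      have : (2 : ℝ) ≤ (n : ℝ) := by exact_mod_cast hn2
      intro hc; nlinarith
    rw [div_mul_eq_mul_div, eq_div_iff (mul_ne_zero hn hn1)]
    linear_combination h1

lemma key_sum {n d : ℕ} (a : Fin n → EuclideanSpace ℝ (Fin d)) (s t : ℕ)
    (hs : s < n) (ht : t < n) :
    ∑ τ : Equiv.Perm (Fin n),
        ⟪∑ k : Fin n, (if (k : ℕ) ≤ s then a (τ k) else 0),
          ∑ l : Fin n, (if (l : ℕ) ≤ t then a (τ l) else 0)⟫_ℝ
      = (((min s t : ℕ) : ℝ) + 1) * ((n.factorial : ℝ) / n * ∑ p, ⟪a p, a p⟫_ℝ)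
        + (((s : ℝ) + 1) * ((t : ℝ) + 1) - (((min s t : ℕ) : ℝ) + 1)) *
            ((n.factorial : ℝ) / ((n : ℝ) * ((n : ℝ) - 1)) *
              ((∑ p, ∑ q, ⟪a p, a q⟫_ℝ) - ∑ p, ⟪a p, a p⟫_ℝ)) := by
  classical
  set A : ℝ := (n.factorial : ℝ) / n * ∑ p, ⟪a p, a p⟫_ℝ with hA
  set B : ℝ := (n.factorial : ℝ) / ((n : ℝ) * ((n : ℝ) - 1)) *
      ((∑ p, ∑ q, ⟪a p, a q⟫_ℝ) - ∑ p, ⟪a p, a p⟫_ℝ) with hB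
  have count : ∀ u : ℕ, u < n →
      ∑ k : Fin n, (if (k : ℕ) ≤ u then (1 : ℝ) else 0) = (u : ℝ) + 1 := by
    intro u hu
    rw [Finset.sum_boole, card_le_filter u hu]
    push_cast; ring
  have step1 : ∀ τ : Equiv.Perm (Fin n),
      ⟪∑ k : Fin n, (if (k : ℕ) ≤ s then a (τ k) else 0),
        ∑ l : Fin n, (if (l : ℕ) ≤ t then a (τ l) else 0)⟫_ℝ
      = ∑ k : Fin n, ∑ l : Fin n,
          (if (k : ℕ) ≤ s then (if (l : ℕ) ≤ t then ⟪a (τ k), a (τ l)⟫_ℝ else 0) else 0) := by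
    intro τ
    rw [sum_inner]
    refine Finset.sum_congr rfl fun k _ => ?_
    rw [inner_sum]
    refine Finset.sum_congr rfl fun l _ => ?_
    split_ifs <;> simp
  rw [Finset.sum_congr rfl fun τ _ => step1 τ, Finset.sum_comm]
  rw [Finset.sum_congr rfl fun k _ => Finset.sum_comm]
  have step2 : ∀ k l : Fin n,
      (∑ τ : Equiv.Perm (Fin n),
        (if (k : ℕ) ≤ s then (if (l : ℕ) ≤ t then ⟪a (τ k), a (τ l)⟫_ℝ else 0) else 0))
      = B * ((if (k : ℕ) ≤ s then (1:ℝ) else 0) * (if (l : ℕ) ≤ t then (1:ℝ) else 0))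
        + (A - B) * ((if (k : ℕ) ≤ min s t then (1:ℝ) else 0) * (if l = k then (1:ℝ) else 0)) := by
    intro k l
    by_cases h1 : (k : ℕ) ≤ s
    · by_cases h2 : (l : ℕ) ≤ t
      · simp only [h1, h2, if_true]
        rw [perm_inner_moment a k l, ← hA, ← hB]
        by_cases h3 : l = k
        · have hm : (k : ℕ) ≤ min s t := le_min h1 (h3 ▸ h2)
          rw [if_pos h3.symm, if_pos hm, if_pos h3]
          ring
        · have h3' : ¬ (k = l) := fun hc => h3 hc.symm
          rw [if_neg h3', if_neg h3]
          ring
      · have hz : ∀ τ : Equiv.Perm (Fin n),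
            (if (k : ℕ) ≤ s then (if (l : ℕ) ≤ t then ⟪a (τ k), a (τ l)⟫_ℝ else 0) else 0) = 0 := by
          intro τ; rw [if_neg h2, ite_self]
        rw [Finset.sum_congr rfl fun τ _ => hz τ, Finset.sum_const_zero, if_neg h2]
        by_cases h3 : l = k
        · have hm : ¬ ((k : ℕ) ≤ min s t) := fun hc => h2 (h3 ▸ le_trans hc (min_le_right s t))
          rw [if_neg hm]; ring
        · rw [if_neg h3]; ring
    · have hm : ¬ ((k : ℕ) ≤ min s t) := fun hc => h1 (le_trans hc (min_le_left s t))
      simp only [h1, if_false, Finset.sum_const_zero]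
      rw [if_neg hm]; ring
  rw [Finset.sum_congr rfl fun k _ => Finset.sum_congr rfl fun l _ => step2 k l]
  have inner1 : ∀ k : Fin n, ∑ l : Fin n, (if l = k then (1:ℝ) else 0) = 1 := by
    intro k
    rw [Finset.sum_ite_eq' Finset.univ k (fun _ => (1:ℝ))]
    simp
  have row : ∀ k : Fin n,
      ∑ l : Fin n, (B * ((if (k : ℕ) ≤ s then (1:ℝ) else 0) * (if (l : ℕ) ≤ t then (1:ℝ) else 0))
        + (A - B) * ((if (k : ℕ) ≤ min s t then (1:ℝ) else 0) * (if l = k then (1:ℝ) else 0)))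
      = B * ((if (k : ℕ) ≤ s then (1:ℝ) else 0) * ((t : ℝ) + 1))
        + (A - B) * (if (k : ℕ) ≤ min s t then (1:ℝ) else 0) := by
    intro k
    rw [Finset.sum_add_distrib, ← Finset.mul_sum, ← Finset.mul_sum, ← Finset.mul_sum,
      ← Finset.mul_sum, count t ht, inner1 k, mul_one]
  rw [Finset.sum_congr rfl fun k _ => row k, Finset.sum_add_distrib, ← Finset.mul_sum,
    ← Finset.mul_sum, ← Finset.sum_mul, count s hs,
    count (min s t) (lt_of_le_of_lt (min_le_left s t) hs)]
  ring

-- Fin-indexed sum formulas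
lemma fin_sum_one (m : ℕ) :
    ∑ j : Fin m, (((j : ℕ) : ℝ) + 1) = (m : ℝ) * ((m : ℝ) + 1) / 2 := by
  rw [Fin.sum_univ_eq_sum_range (fun x => ((x : ℝ) + 1)) m]
  exact sum_range_id' m

lemma fin_sum_sq (m : ℕ) :
    ∑ j : Fin m, ((((j : ℕ) : ℝ) + 1) * (((j : ℕ) : ℝ) + 1))
      = (m : ℝ) * ((m : ℝ) + 1) * (2 * (m : ℝ) + 1) / 6 := by
  rw [Fin.sum_univ_eq_sum_range (fun x => (((x : ℕ) : ℝ) + 1) * (((x : ℕ) : ℝ) + 1)) m]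
  rw [← sum_range_sq' m]
  exact Finset.sum_congr rfl fun x _ => by ring

lemma fin_sum_min (m : ℕ) :
    ∑ j : Fin m, ∑ j' : Fin m, (((min (j : ℕ) (j' : ℕ) : ℕ) : ℝ) + 1)
      = (m : ℝ) * ((m : ℝ) + 1) * (2 * (m : ℝ) + 1) / 6 := by
  rw [Fin.sum_univ_eq_sum_range
    (fun x => ∑ j' : Fin m, (((min x (j' : ℕ) : ℕ) : ℝ) + 1)) m]
  rw [← sum_range_min' m]
  refine Finset.sum_congr rfl fun x _ => ?_
  exact Fin.sum_univ_eq_sum_range (fun y => (((min x y : ℕ) : ℝ) + 1)) m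

lemma fin_sum_prod (m : ℕ) :
    ∑ j : Fin m, ∑ j' : Fin m, ((((j : ℕ) : ℝ) + 1) * (((j' : ℕ) : ℝ) + 1))
      = ((m : ℝ) * ((m : ℝ) + 1) / 2) ^ 2 := by
  rw [← Finset.sum_mul_sum]
  rw [fin_sum_one m]
  ring


/-- The average over `σ ∈ S = (S_n)^{e'}` of the squared radius of gyration of the
intermediate point cloud `X^σ_i = (x^σ_{i,1},…,x^σ_{i,n−1})` equals
`(n(n+1)(n−2)/(12(n−1)²))·Rg²(Wᵢ) + ((n−2)/(12n))·‖w'ᵢ‖²`. -/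
theorem average_rg2_intermediate_cloud {d n v' e' : ℕ} (hd : 1 ≤ d) (hn : 2 ≤ n)
    (head tl : Fin e' → Fin v')
    (X' : Fin v' → EuclideanSpace ℝ (Fin d))
    (w : Fin e' → Fin n → EuclideanSpace ℝ (Fin d))
    (hw : ∀ i, ∑ j, w i j = X' (head i) - X' (tl i))
    (i : Fin e') :
    (Fintype.card (Fin e' → Equiv.Perm (Fin n)) : ℝ)⁻¹ *
        ∑ σ : Fin e' → Equiv.Perm (Fin n),
          uRg2 (fun j : Fin (n - 1) => xpos X' tl w σ i j)
      = ((n : ℝ) * ((n : ℝ) + 1) * ((n : ℝ) - 2) / (12 * ((n : ℝ) - 1) ^ 2)) *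
          uRg2 (w i)
        + (((n : ℝ) - 2) / (12 * (n : ℝ))) * ‖X' (head i) - X' (tl i)‖ ^ 2 := by
  classical
  haveI : Nonempty (Fin (n - 1)) := ⟨⟨0, by omega⟩⟩
  set a : Fin n → EuclideanSpace ℝ (Fin d) := w i with ha
  set Q : ℝ := ∑ p, ⟪a p, a p⟫_ℝ with hQ
  set T : ℝ := ∑ p, ∑ q, ⟪a p, a q⟫_ℝ with hT
  set A : ℝ := (n.factorial : ℝ) / n * Q with hA
  set B : ℝ := (n.factorial : ℝ) / ((n : ℝ) * ((n : ℝ) - 1)) * (T - Q) with hB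
  set M : ℝ := ((n - 1 : ℕ) : ℝ) with hMdef
  have hM : M = (n : ℝ) - 1 := by
    rw [hMdef, Nat.cast_sub (by omega : 1 ≤ n)]; norm_num
  have hn0 : (n : ℝ) ≠ 0 := Nat.cast_ne_zero.mpr (by omega)
  have hnR2 : (2 : ℝ) ≤ (n : ℝ) := by exact_mod_cast hn
  have hn1 : (n : ℝ) - 1 ≠ 0 := by nlinarith
  have hM0 : M ≠ 0 := by rw [hM]; exact hn1
  have hf : (n.factorial : ℝ) ≠ 0 := Nat.cast_ne_zero.mpr n.factorial_ne_zero
  set F : Equiv.Perm (Fin n) → ℝ := fun τ =>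
    uRg2 (fun j : Fin (n - 1) => ∑ k : Fin n, if (k : ℕ) ≤ (j : ℕ) then a (τ k) else 0) with hF
  -- Step A: drop the translation
  have hstepA : ∀ σ : Fin e' → Equiv.Perm (Fin n),
      uRg2 (fun j : Fin (n - 1) => xpos X' tl w σ i j) = F (σ i) := by
    intro σ
    have h1 : (fun j : Fin (n - 1) => xpos X' tl w σ i j)
        = fun j : Fin (n - 1) => X' (tl i)
            + ∑ k : Fin n, if (k : ℕ) ≤ (j : ℕ) then a (σ i k) else 0 := rfl
    rw [h1, uRg2_const_add]
  rw [Finset.sum_congr rfl fun σ _ => hstepA σ]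
  -- Step B: factor out the unused coordinates
  have hcPi : (Fintype.card (Fin e' → Equiv.Perm (Fin n)) : ℝ) ≠ 0 :=
    Nat.cast_ne_zero.mpr Fintype.card_ne_zero
  have hcG : (Fintype.card (Equiv.Perm (Fin n)) : ℝ) ≠ 0 :=
    Nat.cast_ne_zero.mpr Fintype.card_ne_zero
  have hstepB : (Fintype.card (Fin e' → Equiv.Perm (Fin n)) : ℝ)⁻¹ *
      ∑ σ : Fin e' → Equiv.Perm (Fin n), F (σ i)
      = (Fintype.card (Equiv.Perm (Fin n)) : ℝ)⁻¹ * ∑ τ : Equiv.Perm (Fin n), F τ := by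
    have hB2 := sum_pi_eval i F
    rw [inv_mul_eq_div, inv_mul_eq_div, div_eq_div_iff hcPi hcG]
    linear_combination hB2
  rw [hstepB]
  -- Step C: expand uRg2 through inner products
  have hcard1 : ((Fintype.card (Fin (n - 1)) : ℕ) : ℝ) ≠ 0 := by
    rw [Fintype.card_fin]; exact hM0
  have hFτ : ∀ τ : Equiv.Perm (Fin n),
      F τ = M⁻¹ * (∑ j : Fin (n - 1),
          ⟪∑ k : Fin n, (if (k : ℕ) ≤ (j : ℕ) then a (τ k) else 0),
            ∑ l : Fin n, (if (l : ℕ) ≤ (j : ℕ) then a (τ l) else 0)⟫_ℝ)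
        - (M⁻¹) ^ 2 * (∑ j : Fin (n - 1), ∑ j' : Fin (n - 1),
          ⟪∑ k : Fin n, (if (k : ℕ) ≤ (j : ℕ) then a (τ k) else 0),
            ∑ l : Fin n, (if (l : ℕ) ≤ (j' : ℕ) then a (τ l) else 0)⟫_ℝ) := by
    intro τ
    have h1 := uRg2_eq_inner hcard1
      (fun j : Fin (n - 1) => ∑ k : Fin n, if (k : ℕ) ≤ (j : ℕ) then a (τ k) else 0)
    simpa only [Fintype.card_fin] using h1
  rw [Finset.sum_congr rfl fun τ _ => hFτ τ, Finset.sum_sub_distrib,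
    ← Finset.mul_sum, ← Finset.mul_sum]
  have hjn : ∀ j : Fin (n - 1), (j : ℕ) < n := by
    intro j; have := j.2; omega
  have keyd : ∀ j : Fin (n - 1),
      ∑ τ : Equiv.Perm (Fin n),
          ⟪∑ k : Fin n, (if (k : ℕ) ≤ (j : ℕ) then a (τ k) else 0),
            ∑ l : Fin n, (if (l : ℕ) ≤ (j : ℕ) then a (τ l) else 0)⟫_ℝ
        = (((j : ℕ) : ℝ) + 1) * (A - B) + ((((j : ℕ) : ℝ) + 1) * (((j : ℕ) : ℝ) + 1)) * B := by
    intro j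
    rw [key_sum a (j : ℕ) (j : ℕ) (hjn j) (hjn j), ← hQ, ← hT, ← hA, ← hB]
    simp only [min_self]
    ring
  have keyo : ∀ j j' : Fin (n - 1),
      ∑ τ : Equiv.Perm (Fin n),
          ⟪∑ k : Fin n, (if (k : ℕ) ≤ (j : ℕ) then a (τ k) else 0),
            ∑ l : Fin n, (if (l : ℕ) ≤ (j' : ℕ) then a (τ l) else 0)⟫_ℝ
        = (((min (j : ℕ) (j' : ℕ) : ℕ) : ℝ) + 1) * (A - B)
          + ((((j : ℕ) : ℝ) + 1) * (((j' : ℕ) : ℝ) + 1)) * B := by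
    intro j j'
    rw [key_sum a (j : ℕ) (j' : ℕ) (hjn j) (hjn j'), ← hQ, ← hT, ← hA, ← hB]
    ring
  have hsum1 : ∑ τ : Equiv.Perm (Fin n), ∑ j : Fin (n - 1),
        ⟪∑ k : Fin n, (if (k : ℕ) ≤ (j : ℕ) then a (τ k) else 0),
          ∑ l : Fin n, (if (l : ℕ) ≤ (j : ℕ) then a (τ l) else 0)⟫_ℝ
      = (M * (M + 1) / 2) * (A - B) + (M * (M + 1) * (2 * M + 1) / 6) * B := by
    rw [Finset.sum_comm, Finset.sum_congr rfl fun j _ => keyd j, Finset.sum_add_distrib,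
      ← Finset.sum_mul, ← Finset.sum_mul, fin_sum_one (n - 1), fin_sum_sq (n - 1), hMdef]
  have hsum2 : ∑ τ : Equiv.Perm (Fin n), ∑ j : Fin (n - 1), ∑ j' : Fin (n - 1),
        ⟪∑ k : Fin n, (if (k : ℕ) ≤ (j : ℕ) then a (τ k) else 0),
          ∑ l : Fin n, (if (l : ℕ) ≤ (j' : ℕ) then a (τ l) else 0)⟫_ℝ
      = (M * (M + 1) * (2 * M + 1) / 6) * (A - B) + ((M * (M + 1) / 2) ^ 2) * B := by
    rw [Finset.sum_comm, Finset.sum_congr rfl fun j _ => Finset.sum_comm]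
    have hrow : ∀ j : Fin (n - 1),
        ∑ j' : Fin (n - 1), ∑ τ : Equiv.Perm (Fin n),
            ⟪∑ k : Fin n, (if (k : ℕ) ≤ (j : ℕ) then a (τ k) else 0),
              ∑ l : Fin n, (if (l : ℕ) ≤ (j' : ℕ) then a (τ l) else 0)⟫_ℝ
          = (∑ j' : Fin (n - 1), (((min (j : ℕ) (j' : ℕ) : ℕ) : ℝ) + 1)) * (A - B)
            + (∑ j' : Fin (n - 1), ((((j : ℕ) : ℝ) + 1) * (((j' : ℕ) : ℝ) + 1))) * B := by
      intro j
      rw [Finset.sum_congr rfl fun j' _ => keyo j j', Finset.sum_add_distrib,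
        ← Finset.sum_mul, ← Finset.sum_mul]
    rw [Finset.sum_congr rfl fun j _ => hrow j, Finset.sum_add_distrib,
      ← Finset.sum_mul, ← Finset.sum_mul, fin_sum_min (n - 1), fin_sum_prod (n - 1), hMdef]
  rw [hsum1, hsum2]
  -- RHS conversions
  have hRg : uRg2 a = ((n : ℝ))⁻¹ * Q - (((n : ℝ))⁻¹) ^ 2 * T := by
    have h1 := uRg2_eq_inner (V := Fin n)
      (by rw [Fintype.card_fin]; exact hn0) a
    simpa only [Fintype.card_fin, ← hQ, ← hT] using h1
  have hnorm : ‖X' (head i) - X' (tl i)‖ ^ 2 = T := by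
    rw [← hw i, ← real_inner_self_eq_norm_sq, hT]
    rw [sum_inner]
    exact Finset.sum_congr rfl fun p _ => inner_sum _ _ _
  rw [hRg, hnorm]
  have hcperm : (Fintype.card (Equiv.Perm (Fin n)) : ℝ) = (n.factorial : ℝ) := by
    rw [Fintype.card_perm, Fintype.card_fin]
  rw [hcperm, hA, hB, hM]
  field_simp
  ring
end

section
/- With the subdivision setup below, for n ≥ 2 and each i ∈ Fin e': (a) the average over σ ∈ S of the center of mass μ(X^σ_i) of the intermediate point cloud X^σ_i equals m'_i = (X'(head i) + X'(tail i))/2; and (b) the average over all pairs (σ, j) with σ ∈ S and j ∈ {1,…,n−1} of the positions x^σ_{i,j} also equals m'_i. -/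
open Finset

section helpers
variable {M : Type*} [AddCommMonoid M]

lemma sum_pi_eval' {ι : Type*} [DecidableEq ι] [Fintype ι] {P : Type*} [Fintype P]
    (i : ι) (h : P → M) :
    ∑ σ : ι → P, h (σ i) = Fintype.card ({ j // j ≠ i } → P) • ∑ π : P, h π := by
  rw [show (∑ σ : ι → P, h (σ i)) = ∑ p : P × ({ j // j ≠ i } → P), h p.1 from
    Fintype.sum_equiv (Equiv.funSplitAt i P) _ _ (fun σ => rfl)]
  rw [Fintype.sum_prod_type]
  simp only [Finset.sum_const, card_univ]
  rw [← Finset.smul_sum]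

lemma sum_perm_apply_eq' {n : ℕ} (f : Fin n → M) (k k' : Fin n) :
    ∑ π : Equiv.Perm (Fin n), f (π k) = ∑ π : Equiv.Perm (Fin n), f (π k') := by
  refine Fintype.sum_equiv (Equiv.mulRight (Equiv.swap k' k)) _ _ ?_
  intro π
  simp [Equiv.Perm.mul_apply]

lemma nsmul_sum_perm' {n : ℕ} (f : Fin n → M) (k : Fin n) :
    n • ∑ π : Equiv.Perm (Fin n), f (π k) = (n.factorial) • ∑ x, f x := by
  have h1 : ∑ k' : Fin n, ∑ π : Equiv.Perm (Fin n), f (π k') =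
      n • ∑ π : Equiv.Perm (Fin n), f (π k) := by
    rw [Finset.sum_congr rfl fun k' _ => sum_perm_apply_eq' f k' k]
    simp
  rw [← h1, Finset.sum_comm]
  rw [Finset.sum_congr rfl fun π _ => Equiv.sum_comp π f]
  simp [Fintype.card_perm]

end helpers

private lemma key_pair {d n v' e' : ℕ} (hn : 2 ≤ n)
    (head tl : Fin e' → Fin v')
    (X' : Fin v' → EuclideanSpace ℝ (Fin d))
    (w : Fin e' → Fin n → EuclideanSpace ℝ (Fin d))
    (hw : ∀ i, ∑ j, w i j = X' (head i) - X' (tl i))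
    (i : Fin e') :
    uMu (fun p : Fin (n - 1) × (Fin e' → Equiv.Perm (Fin n)) =>
        xpos X' tl w p.2 i p.1)
      = (2 : ℝ)⁻¹ • (X' (head i) + X' (tl i)) := by
  classical
  have hn0 : (n : ℝ) ≠ 0 := by positivity
  set c₂ := Fintype.card ({ j // j ≠ i } → Equiv.Perm (Fin n)) with hc₂
  have hc₂0 : 0 < c₂ := Fintype.card_pos
  set g : EuclideanSpace ℝ (Fin d) :=
    ∑ π : Equiv.Perm (Fin n), w i (π ⟨0, by omega⟩) with hgdef
  have hsig : ∀ k : Fin n,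
      ∑ σ : Fin e' → Equiv.Perm (Fin n), w i (σ i k) = c₂ • g := by
    intro k
    have h1 := sum_pi_eval' i (fun π : Equiv.Perm (Fin n) => w i (π k))
    rw [sum_perm_apply_eq' (w i) k ⟨0, by omega⟩] at h1
    exact h1
  have hgW : (n : ℝ) • g = (n.factorial : ℝ) • (X' (head i) - X' (tl i)) := by
    rw [Nat.cast_smul_eq_nsmul, Nat.cast_smul_eq_nsmul, hgdef,
      nsmul_sum_perm' (w i) ⟨0, by omega⟩, hw i]
  have hgval : g = ((n.factorial : ℝ) / n) • (X' (head i) - X' (tl i)) := by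
    rw [div_eq_inv_mul, mul_smul, eq_inv_smul_iff₀ hn0]
    exact hgW
  -- the count of k's below j
  have hcard : ∀ j : Fin (n - 1),
      ((univ : Finset (Fin n)).filter fun k : Fin n => (k:ℕ) ≤ (j:ℕ)).card = (j:ℕ) + 1 := by
    intro j
    have hj : (j : ℕ) < n := by omega
    rw [show ((univ : Finset (Fin n)).filter fun k : Fin n => (k:ℕ) ≤ (j:ℕ)) = Iic ⟨j, hj⟩ by
      ext k; simp [Fin.le_def], Fin.card_Iic]
  -- inner sum over σ for fixed j
  have hinner : ∀ j : Fin (n - 1),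
      (∑ σ : Fin e' → Equiv.Perm (Fin n),
        (X' (tl i) + ∑ k : Fin n, if (k:ℕ) ≤ (j:ℕ) then w i (σ i k) else 0))
      = Fintype.card (Fin e' → Equiv.Perm (Fin n)) • X' (tl i)
        + ((j:ℕ) + 1) • (c₂ • g) := by
    intro j
    rw [Finset.sum_add_distrib, Finset.sum_const, card_univ]
    congr 1
    rw [Finset.sum_comm]
    have : ∀ k : Fin n,
        (∑ σ : Fin e' → Equiv.Perm (Fin n),
          if (k:ℕ) ≤ (j:ℕ) then w i (σ i k) else 0)
        = if (k:ℕ) ≤ (j:ℕ) then c₂ • g else 0 := by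
      intro k
      by_cases h : (k:ℕ) ≤ (j:ℕ) <;> simp [h, hsig k]
    rw [Finset.sum_congr rfl fun k _ => this k, ← Finset.sum_filter, Finset.sum_const,
      hcard j]
  have hK : (∑ j : Fin (n-1), ((j:ℕ) + 1)) * 2 = n * (n - 1) := by
    have h1 : (∑ j : Fin (n-1), ((j:ℕ) + 1)) = ∑ j ∈ range (n-1), (j + 1) :=
      Fin.sum_univ_eq_sum_range _ _
    have h2 : ∑ j ∈ range ((n-1)+1), j = ∑ j ∈ range (n-1), (j + 1) + 0 :=
      Finset.sum_range_succ' _ _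
    have h3 : (n-1)+1 = n := by omega
    rw [h3] at h2
    have h4 := Finset.sum_range_id_mul_two n
    omega
  -- now compute
  unfold uMu xpos
  rw [Fintype.sum_prod_type, Finset.sum_congr rfl fun j _ => hinner j,
    Finset.sum_add_distrib, Finset.sum_const, card_univ, ← Finset.sum_smul]
  have hCc2 : Fintype.card (Fin e' → Equiv.Perm (Fin n)) = n.factorial * c₂ := by
    rw [Fintype.card_congr (Equiv.funSplitAt i (Equiv.Perm (Fin n))), Fintype.card_prod,
      Fintype.card_perm, Fintype.card_fin]
  rw [Fintype.card_prod, Fintype.card_fin, hCc2, hgval]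
  set K := ∑ j : Fin (n-1), ((j:ℕ) + 1) with hKdef
  have hKr : (K : ℝ) * 2 = (n : ℝ) * ((n - 1 : ℕ) : ℝ) := by exact_mod_cast hK
  have hfac0 : (n.factorial : ℝ) ≠ 0 := by positivity
  have hc₂0' : (c₂ : ℝ) ≠ 0 := by positivity
  have hn10 : ((n - 1 : ℕ) : ℝ) ≠ 0 := by
    have : 0 < n - 1 := by omega
    positivity
  have hn1r : (n:ℝ) - 1 ≠ 0 := by
    have : (2:ℝ) ≤ n := by exact_mod_cast hn
    intro h; linarith
  push_cast [Nat.cast_sub (by omega : 1 ≤ n)] at hKr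
  have hden : ((n:ℝ) - 1) * ((n.factorial : ℝ) * (c₂:ℝ)) * (n:ℝ) ≠ 0 :=
    mul_ne_zero (mul_ne_zero hn1r (mul_ne_zero hfac0 hc₂0')) hn0
  have hcs : ((n - 1 : ℕ) : ℝ) = (n:ℝ) - 1 := by
    push_cast [Nat.cast_sub (by omega : 1 ≤ n)]; ring
  have hK' : (K : ℝ) = (n:ℝ) * ((n:ℝ) - 1) / 2 := by linarith
  match_scalars
  · field_simp
    rw [hcs, hK']; ring
  · field_simp
    rw [hcs, hK']; ring


private lemma uMu_uMu {α β : Type*} [Fintype α] [Fintype β] {d : ℕ}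
    (F : α → β → EuclideanSpace ℝ (Fin d)) :
    uMu (fun a => uMu (F a)) = uMu (fun p : β × α => F p.2 p.1) := by
  unfold uMu
  rw [← Finset.smul_sum, smul_smul, Fintype.card_prod, Fintype.sum_prod_type,
    Nat.cast_mul, mul_inv, Finset.sum_comm, mul_comm]

/-- (a) The average over `σ ∈ S` of the centers of mass `μ(X^σ_i)` of the intermediate
clouds equals the edge midpoint `m'ᵢ = (X'(head i) + X'(tail i))/2`; (b) the average
over all pairs `(σ, j)` of the positions `x^σ_{i,j}` also equals `m'ᵢ`. -/
theorem average_center_of_mass_is_midpoint {d n v' e' : ℕ} (hd : 1 ≤ d) (hn : 2 ≤ n)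
    (head tl : Fin e' → Fin v')
    (X' : Fin v' → EuclideanSpace ℝ (Fin d))
    (w : Fin e' → Fin n → EuclideanSpace ℝ (Fin d))
    (hw : ∀ i, ∑ j, w i j = X' (head i) - X' (tl i))
    (i : Fin e') :
    uMu (fun σ : Fin e' → Equiv.Perm (Fin n) =>
        uMu (fun j : Fin (n - 1) => xpos X' tl w σ i j))
      = (2 : ℝ)⁻¹ • (X' (head i) + X' (tl i)) ∧
    uMu (fun p : Fin (n - 1) × (Fin e' → Equiv.Perm (Fin n)) =>
        xpos X' tl w p.2 i p.1)
      = (2 : ℝ)⁻¹ • (X' (head i) + X' (tl i)) := by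
  have key := key_pair hn head tl X' w hw i
  exact ⟨by rw [uMu_uMu]; exact key, key⟩
end
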